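/- Let D be a skew Ferrers diagram occupying exactly rows 1,…,r and columns 1,…,c, whose graph G_D has k components. Define weights w(i,j) = (i − (r+j))² for (i,j) ∈ D, and define f : Q_{G_D} → ℝ by f(p) = max{ t ∈ ℝ : (p,t) ∈ ConvHull{(e_i − e_{r+j}, w(i,j)) : (i,j) ∈ D} ⊆ ℝ^{r+c} × ℝ } (the concave piecewise linear extension of the weights). Then f is concave, f is affine on each simplex Q_S = ConvHull{e_i − e_{r+j} : (i,j) ∈ S} for every noncrossing alternating spanning forest S of G_D with r+c−k edges, and every convex subset of Q_{G_D} on which f is affine is contained in Q_S for some such forest S. In particular, the noncrossing alternating triangulation of Q_{G_D} is a regular triangulation. -/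

import Mathlib

open scoped BigOperators

/-- A set of boxes `(row, column)` is a skew Ferrers diagram: it is closed under
taking any box lying weakly between two of its boxes (componentwise). -/
def IsSkew (A : Set (ℕ × ℕ)) : Prop :=
  ∀ p ∈ A, ∀ q ∈ A, ∀ a b : ℕ, p.1 ≤ a → a ≤ q.1 → p.2 ≤ b → b ≤ q.2 → (a, b) ∈ A

/-- `A` occupies exactly the rows `1,…,r` and the columns `1,…,c`. -/
def Occupies (A : Set (ℕ × ℕ)) (r c : ℕ) : Prop :=
  (∀ p ∈ A, 1 ≤ p.1 ∧ p.1 ≤ r ∧ 1 ≤ p.2 ∧ p.2 ≤ c) ∧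
  (∀ i, 1 ≤ i → i ≤ r → ∃ j, (i, j) ∈ A) ∧
  (∀ j, 1 ≤ j → j ≤ c → ∃ i, (i, j) ∈ A)

/-- Two boxes of `A` lie in the same component of `A` (equivalently, the corresponding
edges lie in the same connected component of the bipartite graph `G_A`): they are joined
by a chain of boxes of `A` successively sharing a row or a column. -/
def sameComp (A : Set (ℕ × ℕ)) (p q : A) : Prop :=
  Relation.ReflTransGen
    (fun a b : A => (a : ℕ × ℕ).1 = (b : ℕ × ℕ).1 ∨ (a : ℕ × ℕ).2 = (b : ℕ × ℕ).2) p q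

/-- The number of connected components of the bipartite graph `G_A` (for `A` occupying
exactly its rows and columns, this is the number of components of `A` under the
transitive closure of sharing a row or column). -/
noncomputable def compCount (A : Set (ℕ × ℕ)) : ℕ := Nat.card (Quot (sameComp A))

/-- The bipartite graph on the boxes `S` (rows and columns as vertices, boxes as edges)
is acyclic: every nonempty subset of `S` contains a box which is alone in its row or
alone in its column within that subset (i.e. every nonempty subgraph has a vertex of
degree one, which characterizes forests). -/
def RowColAcyclic (S : Finset (ℕ × ℕ)) : Prop :=
  ∀ S' ⊆ S, S'.Nonempty → ∃ p ∈ S',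
    (S'.filter (fun q => q.1 = p.1)).card = 1 ∨ (S'.filter (fun q => q.2 = p.2)).card = 1

/-- `S ⊆ D` is a noncrossing alternating spanning forest of `G_D` with `r+c-k` edges. -/
def IsNASF (D : Finset (ℕ × ℕ)) (r c k : ℕ) (S : Finset (ℕ × ℕ)) : Prop :=
  S ⊆ D ∧ S.card = r + c - k ∧
  (∀ i, 1 ≤ i → i ≤ r → ∃ j, (i, j) ∈ S) ∧
  (∀ j, 1 ≤ j → j ≤ c → ∃ i, (i, j) ∈ S) ∧
  RowColAcyclic S ∧
  ∀ p ∈ S, ∀ q ∈ S, ¬(p.1 < q.1 ∧ p.2 < q.2)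

/-- The vertex `e_i - e_{r+j} ∈ ℝ^{r+c}` associated to the (1-indexed) box `(i,j)`. -/
def boxVec (r c : ℕ) (p : ℕ × ℕ) : Fin (r + c) → ℝ :=
  fun t => (if (t : ℕ) = p.1 - 1 then 1 else 0) - (if (t : ℕ) = r + p.2 - 1 then 1 else 0)

/-- The concave piecewise linear extension of the weights `w(i,j) = (i - (r+j))²`:
`f p` is the largest `t` with `(p,t)` in the convex hull of the lifted vertices. -/
noncomputable def natFun (D : Finset (ℕ × ℕ)) (r c : ℕ) : (Fin (r + c) → ℝ) → ℝ :=
  fun p => sSup {t : ℝ | (p, t) ∈ convexHull ℝ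
    ((fun q : ℕ × ℕ => (boxVec r c q, ((q.1 : ℝ) - ((r : ℝ) + (q.2 : ℝ))) ^ 2)) ''
      (↑D : Set (ℕ × ℕ)))}

namespace N7

open Relation Finset

/-- one step: two boxes of `S` sharing a row or a column. -/
def Step (S : Finset (ℕ × ℕ)) (a b : ℕ × ℕ) : Prop :=
  a ∈ S ∧ b ∈ S ∧ (a.1 = b.1 ∨ a.2 = b.2)

/-- connectivity between boxes, through boxes of `S`. -/
def Conn (S : Finset (ℕ × ℕ)) : ℕ × ℕ → ℕ × ℕ → Prop := ReflTransGen (Step S)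

lemma step_symm {S : Finset (ℕ × ℕ)} {a b : ℕ × ℕ} (h : Step S a b) : Step S b a :=
  ⟨h.2.1, h.1, h.2.2.imp Eq.symm Eq.symm⟩

lemma conn_refl {S : Finset (ℕ × ℕ)} (a : ℕ × ℕ) : Conn S a a := ReflTransGen.refl

lemma conn_symm {S : Finset (ℕ × ℕ)} {a b : ℕ × ℕ} (h : Conn S a b) : Conn S b a :=
  (@ReflTransGen.stdSymm _ _ ⟨fun _ _ h => step_symm h⟩).symm _ _ h

lemma conn_trans {S : Finset (ℕ × ℕ)} {a b c : ℕ × ℕ} (h : Conn S a b) (h' : Conn S b c) :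
    Conn S a c := h.trans h'

lemma sameComp_symm {A : Set (ℕ × ℕ)} {x y : A} (h : sameComp A x y) : sameComp A y x :=
  (@ReflTransGen.stdSymm _ _ ⟨fun _ _ h => h.imp Eq.symm Eq.symm⟩).symm _ _ h

lemma sameComp_equiv (A : Set (ℕ × ℕ)) : Equivalence (sameComp A) :=
  ⟨fun _ => ReflTransGen.refl, sameComp_symm, fun h h' => h.trans h'⟩

lemma conn_of_sameComp {S : Finset (ℕ × ℕ)} {x y : (↑S : Set (ℕ × ℕ))}
    (h : sameComp (↑S) x y) : Conn S x.1 y.1 := by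
  induction h with
  | refl => exact ReflTransGen.refl
  | tail _ hstep ih =>
    exact ih.tail ⟨(by exact_mod_cast Subtype.mem _), (by exact_mod_cast Subtype.mem _), hstep⟩

lemma sameComp_of_conn {S : Finset (ℕ × ℕ)} {a b : ℕ × ℕ} (h : Conn S a b)
    (ha : a ∈ S) :
    ∀ hb : b ∈ S, sameComp (↑S) ⟨a, by exact_mod_cast ha⟩ ⟨b, by exact_mod_cast hb⟩ := by
  induction h with
  | refl => intro hb; exact ReflTransGen.refl
  | @tail x y hax hstep ih =>
    intro hy
    exact ReflTransGen.tail (ih hstep.1) hstep.2.2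

/-- rerouting a connection around a "leaf" box `p` (a box whose neighbours are
mutually adjacent). -/
lemma conn_erase {S : Finset (ℕ × ℕ)} {p : ℕ × ℕ}
    (hleaf : ∀ x y : ℕ × ℕ, x ∈ S → y ∈ S → x ≠ p → y ≠ p →
      (x.1 = p.1 ∨ x.2 = p.2) → (y.1 = p.1 ∨ y.2 = p.2) → (x.1 = y.1 ∨ x.2 = y.2))
    {a b : ℕ × ℕ} (h : Conn S a b) (ha : a ∈ S.erase p) (hb : b ≠ p) :
    Conn (S.erase p) a b := by
  have key : ∀ (a' : ℕ × ℕ), Conn S a' b →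
      ∀ w : ℕ × ℕ, w ∈ S.erase p →
        (w = a' ∨ (a' = p ∧ (w.1 = p.1 ∨ w.2 = p.2))) → Conn (S.erase p) w b := by
    intro a' h
    induction h using ReflTransGen.head_induction_on with
    | refl =>
      rintro w hw (rfl | ⟨rfl, _⟩)
      · exact ReflTransGen.refl
      · exact absurd rfl hb
    | @head x c hstep hcb ih =>
      rintro w hw (rfl | ⟨hxp, hrel⟩)
      · by_cases hc : c = p
        · exact ih w hw (Or.inr ⟨hc, hc ▸ hstep.2.2⟩)
        · refine ReflTransGen.head ⟨hw, Finset.mem_erase.mpr ⟨hc, hstep.2.1⟩, hstep.2.2⟩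
            (ih c (Finset.mem_erase.mpr ⟨hc, hstep.2.1⟩) (Or.inl rfl))
      · by_cases hc : c = p
        · exact ih w hw (Or.inr ⟨hc, hrel⟩)
        · have hwp : w ≠ p := (Finset.mem_erase.mp hw).1
          have hwS : w ∈ S := (Finset.mem_erase.mp hw).2
          have hrelc : c.1 = p.1 ∨ c.2 = p.2 := hxp ▸ (step_symm hstep).2.2
          have := hleaf w c hwS hstep.2.1 hwp hc hrel hrelc
          exact ReflTransGen.head ⟨hw, Finset.mem_erase.mpr ⟨hc, hstep.2.1⟩, this⟩
            (ih c (Finset.mem_erase.mpr ⟨hc, hstep.2.1⟩) (Or.inl rfl))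
  exact key a h a ha (Or.inl rfl)

/-- if `p` has no neighbour in `S`, anything connected to `p` equals `p`. -/
lemma conn_isolated {S : Finset (ℕ × ℕ)} {p : ℕ × ℕ}
    (hiso : ∀ q ∈ S, q ≠ p → ¬(q.1 = p.1 ∨ q.2 = p.2)) {b : ℕ × ℕ}
    (h : Conn S p b) : b = p := by
  have key : ∀ a, Conn S a b → a = p → b = p := by
    intro a h
    induction h using ReflTransGen.head_induction_on with
    | refl => exact fun h => h
    | @head x c hstep hcb ih =>
      rintro rfl
      by_cases hc : c = x
      · exact ih hc
      · exact absurd ((step_symm hstep).2.2) (hiso c hstep.2.1 hc)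
  exact key p h rfl

section QuotCount

variable {S : Finset (ℕ × ℕ)} {p : ℕ × ℕ}

noncomputable def quotMap (S : Finset (ℕ × ℕ)) (p : ℕ × ℕ) :
    Quot (sameComp (↑(S.erase p) : Set (ℕ × ℕ))) → Quot (sameComp (↑S : Set (ℕ × ℕ))) :=
  Quot.map (Set.inclusion (by exact_mod_cast Finset.erase_subset p S))
    (fun a b h => by
      induction h with
      | refl => exact ReflTransGen.refl
      | tail _ hstep ih => exact ReflTransGen.tail ih hstep)

lemma quotMap_mk (x : (↑(S.erase p) : Set (ℕ × ℕ))) :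
    quotMap S p (Quot.mk _ x) =
      Quot.mk _ (Set.inclusion (by exact_mod_cast Finset.erase_subset p S) x) := rfl

lemma quotMap_injective
    (hleaf : ∀ x y : ℕ × ℕ, x ∈ S → y ∈ S → x ≠ p → y ≠ p →
      (x.1 = p.1 ∨ x.2 = p.2) → (y.1 = p.1 ∨ y.2 = p.2) → (x.1 = y.1 ∨ x.2 = y.2)) :
    Function.Injective (quotMap S p) := by
  intro x y
  induction x using Quot.ind with | _ a =>
  induction y using Quot.ind with | _ b =>
  intro h
  rw [quotMap_mk, quotMap_mk] at h
  have h2 := ((sameComp_equiv _).eqvGen_iff).mp (Quot.eqvGen_exact h)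
  have hconn : Conn S a.1 b.1 := conn_of_sameComp h2
  have haE : (a : ℕ × ℕ) ∈ S.erase p := by exact_mod_cast a.2
  have hbE : (b : ℕ × ℕ) ∈ S.erase p := by exact_mod_cast b.2
  have h3 := conn_erase hleaf hconn haE (Finset.mem_erase.mp hbE).1
  have h4 := sameComp_of_conn h3 haE hbE
  exact Quot.sound h4

lemma quotMap_surjective (hp : p ∈ S) {q0 : ℕ × ℕ} (hq0 : q0 ∈ S.erase p)
    (hrel : q0.1 = p.1 ∨ q0.2 = p.2) :
    Function.Surjective (quotMap S p) := by
  intro y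
  induction y using Quot.ind with | _ b =>
  by_cases hbp : (b : ℕ × ℕ) = p
  · refine ⟨Quot.mk _ ⟨q0, by exact_mod_cast hq0⟩, ?_⟩
    rw [quotMap_mk]
    have hbb : b = ⟨p, by exact_mod_cast hp⟩ := Subtype.ext hbp
    rw [hbb]
    exact Quot.sound (ReflTransGen.single hrel)
  · refine ⟨Quot.mk _ ⟨b, ?_⟩, ?_⟩
    · exact_mod_cast Finset.mem_erase.mpr ⟨hbp, by exact_mod_cast b.2⟩
    · rw [quotMap_mk]

lemma compCount_erase_of_leaf (hp : p ∈ S)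
    (hleaf : ∀ x y : ℕ × ℕ, x ∈ S → y ∈ S → x ≠ p → y ≠ p →
      (x.1 = p.1 ∨ x.2 = p.2) → (y.1 = p.1 ∨ y.2 = p.2) → (x.1 = y.1 ∨ x.2 = y.2))
    {q0 : ℕ × ℕ} (hq0 : q0 ∈ S.erase p) (hrel : q0.1 = p.1 ∨ q0.2 = p.2) :
    compCount (↑S : Set (ℕ × ℕ)) = compCount (↑(S.erase p) : Set (ℕ × ℕ)) :=
  (Nat.card_eq_of_bijective _ ⟨quotMap_injective hleaf, quotMap_surjective hp hq0 hrel⟩).symm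

lemma compCount_erase_of_isolated (hp : p ∈ S)
    (hiso : ∀ q ∈ S, q ≠ p → ¬(q.1 = p.1 ∨ q.2 = p.2)) :
    compCount (↑S : Set (ℕ × ℕ)) = compCount (↑(S.erase p) : Set (ℕ × ℕ)) + 1 := by
  have hleaf : ∀ x y : ℕ × ℕ, x ∈ S → y ∈ S → x ≠ p → y ≠ p →
      (x.1 = p.1 ∨ x.2 = p.2) → (y.1 = p.1 ∨ y.2 = p.2) → (x.1 = y.1 ∨ x.2 = y.2) :=
    fun x y hx hy hxp hyp hrx _ => absurd hrx (hiso x hx hxp)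
  classical
  let ψ : Quot (sameComp (↑(S.erase p) : Set (ℕ × ℕ))) ⊕ PUnit.{1} →
      Quot (sameComp (↑S : Set (ℕ × ℕ))) :=
    Sum.elim (quotMap S p) (fun _ => Quot.mk _ ⟨p, by exact_mod_cast hp⟩)
  have hbij : Function.Bijective ψ := by
    constructor
    · rintro (x | x) (y | y) h
      · exact congrArg _ (quotMap_injective hleaf h)
      · exfalso
        induction x using Quot.ind with | _ a =>
        simp only [ψ, Sum.elim_inl, Sum.elim_inr, quotMap_mk] at h
        have h2 := ((sameComp_equiv _).eqvGen_iff).mp (Quot.eqvGen_exact h)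
        have hconn : Conn S a.1 p := conn_of_sameComp h2
        have haE : (a : ℕ × ℕ) ∈ S.erase p := by exact_mod_cast a.2
        exact (Finset.mem_erase.mp haE).1 (conn_isolated hiso (conn_symm hconn))
      · exfalso
        induction y using Quot.ind with | _ a =>
        simp only [ψ, Sum.elim_inl, Sum.elim_inr, quotMap_mk] at h
        have h2 := ((sameComp_equiv _).eqvGen_iff).mp (Quot.eqvGen_exact h.symm)
        have hconn : Conn S a.1 p := conn_of_sameComp h2
        have haE : (a : ℕ × ℕ) ∈ S.erase p := by exact_mod_cast a.2
        exact (Finset.mem_erase.mp haE).1 (conn_isolated hiso (conn_symm hconn))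
      · exact congrArg Sum.inr (Subsingleton.elim x y)
    · intro y
      induction y using Quot.ind with | _ b =>
      by_cases hbp : (b : ℕ × ℕ) = p
      · exact ⟨Sum.inr PUnit.unit, congrArg _ (Subtype.ext hbp.symm)⟩
      · refine ⟨Sum.inl (Quot.mk _ ⟨b, ?_⟩), ?_⟩
        · exact_mod_cast Finset.mem_erase.mpr ⟨hbp, by exact_mod_cast b.2⟩
        · show quotMap S p _ = _
          rw [quotMap_mk]
  have := Nat.card_eq_of_bijective _ hbij
  rw [Nat.card_sum] at this
  simpa [compCount] using this.symm

lemma compCount_empty : compCount (∅ : Set (ℕ × ℕ)) = 0 := by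
  rw [compCount, Nat.card_eq_zero]
  left
  refine ⟨fun x => ?_⟩
  induction x using Quot.ind with | _ a =>
  exact a.2

end QuotCount

end N7

namespace N7

open Relation Finset

lemma rowColAcyclic_mono {S T : Finset (ℕ × ℕ)} (h : T ⊆ S) (hac : RowColAcyclic S) :
    RowColAcyclic T := fun S' hS' => hac S' (hS'.trans h)

lemma alone_row {S : Finset (ℕ × ℕ)} {p : ℕ × ℕ} (hp : p ∈ S)
    (h : (S.filter (fun q => q.1 = p.1)).card = 1) : ∀ q ∈ S, q.1 = p.1 → q = p := by
  obtain ⟨x, hx⟩ := Finset.card_eq_one.mp h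
  have hpx : p = x := by
    have : p ∈ S.filter (fun q => q.1 = p.1) := Finset.mem_filter.mpr ⟨hp, rfl⟩
    rw [hx] at this; exact Finset.mem_singleton.mp this
  intro q hq hq1
  have : q ∈ S.filter (fun q => q.1 = p.1) := Finset.mem_filter.mpr ⟨hq, hq1⟩
  rw [hx] at this
  exact (Finset.mem_singleton.mp this).trans hpx.symm

lemma alone_col {S : Finset (ℕ × ℕ)} {p : ℕ × ℕ} (hp : p ∈ S)
    (h : (S.filter (fun q => q.2 = p.2)).card = 1) : ∀ q ∈ S, q.2 = p.2 → q = p := by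
  obtain ⟨x, hx⟩ := Finset.card_eq_one.mp h
  have hpx : p = x := by
    have : p ∈ S.filter (fun q => q.2 = p.2) := Finset.mem_filter.mpr ⟨hp, rfl⟩
    rw [hx] at this; exact Finset.mem_singleton.mp this
  intro q hq hq1
  have : q ∈ S.filter (fun q => q.2 = p.2) := Finset.mem_filter.mpr ⟨hq, hq1⟩
  rw [hx] at this
  exact (Finset.mem_singleton.mp this).trans hpx.symm

lemma compCount_add_card : ∀ S : Finset (ℕ × ℕ), RowColAcyclic S →
    compCount (↑S : Set (ℕ × ℕ)) + S.card
      = (S.image Prod.fst).card + (S.image Prod.snd).card := by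
  intro S
  induction S using Finset.strongInductionOn with | _ S ih => ?_
  intro hac
  rcases S.eq_empty_or_nonempty with rfl | hne
  · simp [compCount_empty]
  obtain ⟨p, hp, hdeg⟩ := hac S (subset_refl S) hne
  have hacE : RowColAcyclic (S.erase p) := rowColAcyclic_mono (Finset.erase_subset _ _) hac
  have IH := ih (S.erase p) (Finset.erase_ssubset hp) hacE
  have hcard : (S.erase p).card = S.card - 1 := Finset.card_erase_of_mem hp
  have hScard : 1 ≤ S.card := Finset.card_pos.mpr ⟨p, hp⟩
  have hfstpos : 1 ≤ (S.image Prod.fst).card :=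
    Finset.card_pos.mpr ⟨p.1, Finset.mem_image_of_mem _ hp⟩
  have hsndpos : 1 ≤ (S.image Prod.snd).card :=
    Finset.card_pos.mpr ⟨p.2, Finset.mem_image_of_mem _ hp⟩
  rcases hdeg with hrow1 | hcol1
  · have hrow := alone_row hp hrow1
    have himgf : (S.erase p).image Prod.fst = (S.image Prod.fst).erase p.1 := by
      ext a
      simp only [Finset.mem_image, Finset.mem_erase]
      constructor
      · rintro ⟨q, ⟨hqp, hq⟩, rfl⟩
        exact ⟨fun h1 => hqp (hrow q hq h1), q, hq, rfl⟩
      · rintro ⟨ha, q, hq, rfl⟩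
        exact ⟨q, ⟨by rintro rfl; exact ha rfl, hq⟩, rfl⟩
    have hfstcard : ((S.image Prod.fst).erase p.1).card = (S.image Prod.fst).card - 1 :=
      Finset.card_erase_of_mem (Finset.mem_image_of_mem _ hp)
    have hleaf : ∀ x y : ℕ × ℕ, x ∈ S → y ∈ S → x ≠ p → y ≠ p →
        (x.1 = p.1 ∨ x.2 = p.2) → (y.1 = p.1 ∨ y.2 = p.2) → (x.1 = y.1 ∨ x.2 = y.2) := by
      intro x y hx hy hxp hyp hrx hry
      have hx2 : x.2 = p.2 := hrx.resolve_left (fun h => hxp (hrow x hx h))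
      have hy2 : y.2 = p.2 := hry.resolve_left (fun h => hyp (hrow y hy h))
      exact Or.inr (hx2.trans hy2.symm)
    by_cases hnbr : ∃ q ∈ S.erase p, q.2 = p.2
    · obtain ⟨q0, hq0, hq02⟩ := hnbr
      have hcc := compCount_erase_of_leaf hp hleaf hq0 (Or.inr hq02)
      have himgs : (S.erase p).image Prod.snd = S.image Prod.snd := by
        ext a
        simp only [Finset.mem_image]
        constructor
        · rintro ⟨q, hq, rfl⟩; exact ⟨q, (Finset.mem_erase.mp hq).2, rfl⟩
        · rintro ⟨q, hq, rfl⟩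
          by_cases hqp : q = p
          · exact ⟨q0, hq0, by rw [hq02, hqp]⟩
          · exact ⟨q, Finset.mem_erase.mpr ⟨hqp, hq⟩, rfl⟩
      rw [himgf, himgs, hfstcard, hcard] at IH
      rw [hcc]
      omega
    · have hiso : ∀ q ∈ S, q ≠ p → ¬(q.1 = p.1 ∨ q.2 = p.2) := by
        intro q hq hqp h
        rcases h with h | h
        · exact hqp (hrow q hq h)
        · exact hnbr ⟨q, Finset.mem_erase.mpr ⟨hqp, hq⟩, h⟩
      have hcc := compCount_erase_of_isolated hp hiso
      have himgs : (S.erase p).image Prod.snd = (S.image Prod.snd).erase p.2 := by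
        ext a
        simp only [Finset.mem_image, Finset.mem_erase]
        constructor
        · rintro ⟨q, ⟨hqp, hq⟩, rfl⟩
          exact ⟨fun h => hnbr ⟨q, Finset.mem_erase.mpr ⟨hqp, hq⟩, h⟩, q, hq, rfl⟩
        · rintro ⟨ha, q, hq, rfl⟩
          exact ⟨q, ⟨by rintro rfl; exact ha rfl, hq⟩, rfl⟩
      have hsndcard : ((S.image Prod.snd).erase p.2).card = (S.image Prod.snd).card - 1 :=
        Finset.card_erase_of_mem (Finset.mem_image_of_mem _ hp)
      rw [himgf, himgs, hfstcard, hsndcard, hcard] at IH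
      rw [hcc]
      omega
  · have hcol := alone_col hp hcol1
    have himgs : (S.erase p).image Prod.snd = (S.image Prod.snd).erase p.2 := by
      ext a
      simp only [Finset.mem_image, Finset.mem_erase]
      constructor
      · rintro ⟨q, ⟨hqp, hq⟩, rfl⟩
        exact ⟨fun h1 => hqp (hcol q hq h1), q, hq, rfl⟩
      · rintro ⟨ha, q, hq, rfl⟩
        exact ⟨q, ⟨by rintro rfl; exact ha rfl, hq⟩, rfl⟩
    have hsndcard : ((S.image Prod.snd).erase p.2).card = (S.image Prod.snd).card - 1 :=
      Finset.card_erase_of_mem (Finset.mem_image_of_mem _ hp)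
    have hleaf : ∀ x y : ℕ × ℕ, x ∈ S → y ∈ S → x ≠ p → y ≠ p →
        (x.1 = p.1 ∨ x.2 = p.2) → (y.1 = p.1 ∨ y.2 = p.2) → (x.1 = y.1 ∨ x.2 = y.2) := by
      intro x y hx hy hxp hyp hrx hry
      have hx2 : x.1 = p.1 := hrx.resolve_right (fun h => hxp (hcol x hx h))
      have hy2 : y.1 = p.1 := hry.resolve_right (fun h => hyp (hcol y hy h))
      exact Or.inl (hx2.trans hy2.symm)
    by_cases hnbr : ∃ q ∈ S.erase p, q.1 = p.1
    · obtain ⟨q0, hq0, hq01⟩ := hnbr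
      have hcc := compCount_erase_of_leaf hp hleaf hq0 (Or.inl hq01)
      have himgf : (S.erase p).image Prod.fst = S.image Prod.fst := by
        ext a
        simp only [Finset.mem_image]
        constructor
        · rintro ⟨q, hq, rfl⟩; exact ⟨q, (Finset.mem_erase.mp hq).2, rfl⟩
        · rintro ⟨q, hq, rfl⟩
          by_cases hqp : q = p
          · exact ⟨q0, hq0, by rw [hq01, hqp]⟩
          · exact ⟨q, Finset.mem_erase.mpr ⟨hqp, hq⟩, rfl⟩
      rw [himgf, himgs, hsndcard, hcard] at IH
      rw [hcc]
      omega
    · have hiso : ∀ q ∈ S, q ≠ p → ¬(q.1 = p.1 ∨ q.2 = p.2) := by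
        intro q hq hqp h
        rcases h with h | h
        · exact hnbr ⟨q, Finset.mem_erase.mpr ⟨hqp, hq⟩, h⟩
        · exact hqp (hcol q hq h)
      have hcc := compCount_erase_of_isolated hp hiso
      have himgf : (S.erase p).image Prod.fst = (S.image Prod.fst).erase p.1 := by
        ext a
        simp only [Finset.mem_image, Finset.mem_erase]
        constructor
        · rintro ⟨q, ⟨hqp, hq⟩, rfl⟩
          exact ⟨fun h => hnbr ⟨q, Finset.mem_erase.mpr ⟨hqp, hq⟩, h⟩, q, hq, rfl⟩
        · rintro ⟨ha, q, hq, rfl⟩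
          exact ⟨q, ⟨by rintro rfl; exact ha rfl, hq⟩, rfl⟩
      have hfstcard : ((S.image Prod.fst).erase p.1).card = (S.image Prod.fst).card - 1 :=
        Finset.card_erase_of_mem (Finset.mem_image_of_mem _ hp)
      rw [himgf, himgs, hfstcard, hsndcard, hcard] at IH
      rw [hcc]
      omega

end N7

namespace N7

open Relation Finset

/-- noncrossing -/
def NC (S : Finset (ℕ × ℕ)) : Prop := ∀ p ∈ S, ∀ q ∈ S, ¬(p.1 < q.1 ∧ p.2 < q.2)

lemma nc_mono {S T : Finset (ℕ × ℕ)} (h : T ⊆ S) (hnc : NC S) : NC T :=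
  fun p hp q hq => hnc p (h hp) q (h hq)

lemma nc_compare {S : Finset (ℕ × ℕ)} (hnc : NC S) {p q : ℕ × ℕ} (hp : p ∈ S) (hq : q ∈ S) :
    (p.1 ≤ q.1 ∧ q.2 ≤ p.2) ∨ (q.1 ≤ p.1 ∧ p.2 ≤ q.2) := by
  have h1 := hnc p hp q hq
  have h2 := hnc q hq p hp
  omega

/-- noncrossing sets are acyclic. -/
lemma nc_acyclic {S : Finset (ℕ × ℕ)} (hnc : NC S) : RowColAcyclic S := by
  intro S' hS' hne
  classical
  have hnc' : NC S' := nc_mono hS' hnc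
  -- p : minimal row, then maximal column within that row
  obtain ⟨q1, hq1⟩ := hne
  let i0 := (S'.image Prod.fst).min' ⟨q1.1, Finset.mem_image_of_mem _ hq1⟩
  have hi0 : i0 ∈ S'.image Prod.fst := (S'.image Prod.fst).min'_mem _
  obtain ⟨q2, hq2, hq2i⟩ := Finset.mem_image.mp hi0
  let T := S'.filter (fun q => q.1 = i0)
  have hTne : T.Nonempty := ⟨q2, Finset.mem_filter.mpr ⟨hq2, hq2i⟩⟩
  let j0 := (T.image Prod.snd).max' ⟨q2.2, Finset.mem_image_of_mem _ (Finset.mem_filter.mpr ⟨hq2, hq2i⟩)⟩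
  have hj0 : j0 ∈ T.image Prod.snd := (T.image Prod.snd).max'_mem _
  obtain ⟨p, hpT, hpj⟩ := Finset.mem_image.mp hj0
  have hpS' : p ∈ S' := (Finset.mem_filter.mp hpT).1
  have hpi : p.1 = i0 := (Finset.mem_filter.mp hpT).2
  have hminrow : ∀ q ∈ S', p.1 ≤ q.1 := by
    intro q hq
    rw [hpi]
    exact (S'.image Prod.fst).min'_le _ (Finset.mem_image_of_mem _ hq)
  have hmaxcol : ∀ q ∈ S', q.1 = p.1 → q.2 ≤ p.2 := by
    intro q hq hq1
    rw [hpj]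
    exact (T.image Prod.snd).le_max' _
      (Finset.mem_image_of_mem _ (Finset.mem_filter.mpr ⟨hq, hq1.trans hpi⟩))
  refine ⟨p, hpS', ?_⟩
  by_cases hz : ∃ z ∈ S', z ≠ p ∧ z.1 = p.1
  · right
    rw [Finset.card_eq_one]
    refine ⟨p, ?_⟩
    ext q
    simp only [Finset.mem_filter, Finset.mem_singleton]
    constructor
    · rintro ⟨hq, hq2⟩
      by_contra hqp
      obtain ⟨z, hzS, hzp, hz1⟩ := hz
      -- z in p's row with z.2 < p.2 ; q in p's col with q.1 > p.1 : crossing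
      have hz2 : z.2 < p.2 := by
        have := hmaxcol z hzS hz1
        rcases lt_or_eq_of_le this with h | h
        · exact h
        · exact absurd (Prod.ext hz1 h) hzp
      have hq1 : p.1 < q.1 := by
        rcases lt_or_eq_of_le (hminrow q hq) with h | h
        · exact h
        · exact absurd (Prod.ext h.symm hq2) hqp
      exact absurd ⟨hz1 ▸ hq1, hq2 ▸ hz2⟩ (hnc' z hzS q hq)
    · rintro rfl; exact ⟨hpS', rfl⟩
  · left
    rw [Finset.card_eq_one]
    refine ⟨p, ?_⟩
    ext q
    simp only [Finset.mem_filter, Finset.mem_singleton]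
    constructor
    · rintro ⟨hq, hq1⟩
      by_contra hqp
      exact hz ⟨q, hq, hqp, hq1⟩
    · rintro rfl; exact ⟨hpS', rfl⟩

/-! monotone (staircase) chains -/

def DStep (S : Finset (ℕ × ℕ)) (a b : ℕ × ℕ) : Prop :=
  Step S a b ∧ a.1 ≤ b.1 ∧ b.2 ≤ a.2

def DR (S : Finset (ℕ × ℕ)) : ℕ × ℕ → ℕ × ℕ → Prop := ReflTransGen (DStep S)

lemma dr_le {S : Finset (ℕ × ℕ)} {a b : ℕ × ℕ} (h : DR S a b) : a.1 ≤ b.1 ∧ b.2 ≤ a.2 := by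
  induction h with
  | refl => exact ⟨le_refl _, le_refl _⟩
  | tail _ hstep ih => exact ⟨ih.1.trans hstep.2.1, hstep.2.2.trans ih.2⟩

/-- insertion at the head: if `z ⊑ p ⊑ q` and there is a monotone chain from `z` to `q`,
there is one from `p` to `q`. -/
lemma dr_insert_head {S : Finset (ℕ × ℕ)} (hnc : NC S) {p q : ℕ × ℕ} (hpS : p ∈ S) :
    ∀ z : ℕ × ℕ, DR S z q → z.1 ≤ p.1 → p.2 ≤ z.2 → p.1 ≤ q.1 → q.2 ≤ p.2 → DR S p q := by
  intro z h
  induction h using ReflTransGen.head_induction_on with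
  | refl =>
    intro h1 h2 h3 h4
    have : p = q := Prod.ext (le_antisymm h3 h1) (le_antisymm h2 h4)
    rw [this]
    exact ReflTransGen.refl
  | @head x c hstep hcq ih =>
    intro h1 h2 h3 h4
    have hcS : c ∈ S := hstep.1.2.1
    rcases nc_compare hnc hcS hpS with hcp | hpc
    · exact ih hcp.1 hcp.2 h3 h4
    · -- p ⊑ c : p shares the row or column that joins x to c
      obtain ⟨hpc1, hpc2⟩ := hpc
      rcases hstep.1.2.2 with hr | hc2
      · have : p.1 = c.1 := by omega
        exact ReflTransGen.head ⟨⟨hpS, hcS, Or.inl this⟩, this.le, hpc2⟩ hcq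
      · have : p.2 = c.2 := by omega
        exact ReflTransGen.head ⟨⟨hpS, hcS, Or.inr this⟩, hpc1, this.ge⟩ hcq

/-- insertion at the tail. -/
lemma dr_insert_tail {S : Finset (ℕ × ℕ)} (hnc : NC S) {p q : ℕ × ℕ} (hpS : p ∈ S) :
    ∀ z : ℕ × ℕ, DR S q z → q.1 ≤ p.1 → p.2 ≤ q.2 → p.1 ≤ z.1 → z.2 ≤ p.2 → DR S q p := by
  intro z h
  induction h with
  | refl =>
    intro h1 h2 h3 h4
    have : p = q := Prod.ext (le_antisymm h3 h1) (le_antisymm h2 h4)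
    rw [this]
    exact ReflTransGen.refl
  | @tail y z' hqy hstep ih =>
    intro h1 h2 h3 h4
    have hyS : y ∈ S := hstep.1.1
    rcases nc_compare hnc hpS hyS with hpy | hyp
    · exact ih h1 h2 hpy.1 hpy.2
    · obtain ⟨hyp1, hyp2⟩ := hyp
      rcases hstep.1.2.2 with hr | hc2
      · have : y.1 = p.1 := by omega
        exact ReflTransGen.tail hqy ⟨⟨hyS, hpS, Or.inl this⟩, this.le, hyp2⟩
      · have : y.2 = p.2 := by omega
        exact ReflTransGen.tail hqy ⟨⟨hyS, hpS, Or.inr this⟩, hyp1, this.ge⟩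

/-- in a noncrossing set, connected boxes are joined by a monotone chain. -/
lemma conn_mono {S : Finset (ℕ × ℕ)} (hnc : NC S) {a b : ℕ × ℕ} (haS : a ∈ S)
    (h : Conn S a b) : DR S a b ∨ DR S b a := by
  induction h with
  | refl => exact Or.inl ReflTransGen.refl
  | @tail y z hay hstep ih =>
    have hyS : y ∈ S := hstep.1
    have hzS : z ∈ S := hstep.2.1
    rcases ih with hdr | hdr
    · rcases nc_compare hnc hyS hzS with hyz | hzy
      · exact Or.inl (ReflTransGen.tail hdr ⟨hstep, hyz.1, hyz.2⟩)
      · rcases nc_compare hnc haS hzS with haz | hza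
        · exact Or.inl (dr_insert_tail hnc hzS y hdr haz.1 haz.2 hzy.1 hzy.2)
        · -- z ⊑ a ⊑ y, z shares with y ⇒ z shares with a
          obtain ⟨hay1, hay2⟩ := dr_le hdr
          obtain ⟨hza1, hza2⟩ := hza
          rcases hstep.2.2 with hr | hc2
          · have : a.1 = z.1 := by omega
            exact Or.inr (ReflTransGen.single ⟨⟨hzS, haS, Or.inl this.symm⟩, hza1, hza2⟩)
          · have : a.2 = z.2 := by omega
            exact Or.inr (ReflTransGen.single ⟨⟨hzS, haS, Or.inr this.symm⟩, hza1, hza2⟩)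
    · -- hdr : DR S y a
      rcases nc_compare hnc hzS hyS with hzy | hyz
      · exact Or.inr (ReflTransGen.head ⟨step_symm hstep, hzy.1, hzy.2⟩ hdr)
      · rcases nc_compare hnc hzS haS with hza | haz
        · exact Or.inr (dr_insert_head hnc hzS y hdr hyz.1 hyz.2 hza.1 hza.2)
        · -- y ⊑ a ⊑ z, y shares with z ⇒ a shares with z
          obtain ⟨hya1, hya2⟩ := dr_le hdr
          obtain ⟨haz1, haz2⟩ := haz
          rcases hstep.2.2 with hr | hc2
          · have : a.1 = z.1 := by omega
            exact Or.inl (ReflTransGen.single ⟨⟨haS, hzS, Or.inl this⟩, haz1, haz2⟩)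
          · have : a.2 = z.2 := by omega
            exact Or.inl (ReflTransGen.single ⟨⟨haS, hzS, Or.inr this⟩, haz1, haz2⟩)

end N7

namespace N7

open Relation Finset

/-- solving `a i - b j = w (i,j)` on a forest. -/
lemma exists_potential : ∀ S : Finset (ℕ × ℕ), RowColAcyclic S → ∀ w : ℕ × ℕ → ℝ,
    ∃ a b : ℕ → ℝ, ∀ p ∈ S, a p.1 - b p.2 = w p := by
  intro S
  induction S using Finset.strongInductionOn with | _ S ih => ?_
  intro hac w
  rcases S.eq_empty_or_nonempty with rfl | hne
  · exact ⟨0, 0, by simp⟩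
  obtain ⟨p, hp, hdeg⟩ := hac S (subset_refl S) hne
  have hacE : RowColAcyclic (S.erase p) := rowColAcyclic_mono (Finset.erase_subset _ _) hac
  obtain ⟨a, b, hab⟩ := ih (S.erase p) (Finset.erase_ssubset hp) hacE w
  rcases hdeg with hrow1 | hcol1
  · have hrow := alone_row hp hrow1
    refine ⟨Function.update a p.1 (w p + b p.2), b, ?_⟩
    intro q hq
    by_cases hqp : q = p
    · subst hqp
      simp [Function.update_self]
    · have hq1 : q.1 ≠ p.1 := fun h => hqp (hrow q hq h)
      rw [Function.update_of_ne hq1]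
      exact hab q (Finset.mem_erase.mpr ⟨hqp, hq⟩)
  · have hcol := alone_col hp hcol1
    refine ⟨a, Function.update b p.2 (a p.1 - w p), ?_⟩
    intro q hq
    by_cases hqp : q = p
    · subst hqp
      simp [Function.update_self]
    · have hq2 : q.2 ≠ p.2 := fun h => hqp (hcol q hq h)
      rw [Function.update_of_ne hq2]
      exact hab q (Finset.mem_erase.mpr ⟨hqp, hq⟩)

/-- weight of a box -/
noncomputable def wt (r : ℕ) (p : ℕ × ℕ) : ℝ := ((p.1 : ℝ) - ((r : ℝ) + (p.2 : ℝ))) ^ 2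

lemma tel_head {S : Finset (ℕ × ℕ)} {r : ℕ} {a b : ℕ → ℝ}
    (hsol : ∀ p ∈ S, a p.1 - b p.2 = wt r p) {q : ℕ × ℕ} :
    ∀ p : ℕ × ℕ, DR S p q → p ∈ S →
      ((p.1 : ℝ) - ((r : ℝ) + (q.2 : ℝ))) ^ 2 ≤ a p.1 - b q.2 := by
  intro p h
  induction h using ReflTransGen.head_induction_on with
  | refl =>
    intro hq
    rw [hsol q hq, wt]
  | @head x z hstep hzq ih =>
    intro hx
    have hzS : z ∈ S := hstep.1.2.1
    have IH := ih hzS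
    rcases hstep.1.2.2 with hr | hc2
    · rw [hr]
      exact IH
    · have hxa : a x.1 = wt r x + b x.2 := by
        have := hsol x hx; linarith
      have hza : b z.2 = a z.1 - wt r z := by
        have := hsol z hzS; linarith
      have h1 : (x.1 : ℝ) ≤ (z.1 : ℝ) := by exact_mod_cast hstep.2.1
      have h2 : (q.2 : ℝ) ≤ (z.2 : ℝ) := by exact_mod_cast (dr_le hzq).2
      have h3 : ((x.2 : ℝ)) = (z.2 : ℝ) := by exact_mod_cast hc2
      have e1 : b x.2 = b z.2 := congrArg b hc2
      have expand : a x.1 - b q.2 = wt r x - wt r z + (a z.1 - b q.2) := by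
        rw [hxa, e1, hza]; ring
      have h2x : ((q.2 : ℝ)) ≤ (x.2 : ℝ) := by rw [h3]; exact h2
      have quad : ((x.1:ℝ) - ((r:ℝ) + (q.2:ℝ)))^2 + wt r z
          ≤ ((z.1:ℝ) - ((r:ℝ) + (q.2:ℝ)))^2 + wt r x := by
        simp only [wt]
        rw [← h3]
        nlinarith [mul_nonneg (sub_nonneg.mpr h1) (sub_nonneg.mpr h2x)]
      linarith [IH, expand, quad]

lemma tel_tail {S : Finset (ℕ × ℕ)} {r : ℕ} {a b : ℕ → ℝ}
    (hsol : ∀ p ∈ S, a p.1 - b p.2 = wt r p) {p : ℕ × ℕ} :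
    ∀ q : ℕ × ℕ, DR S p q → p ∈ S →
      ((q.1 : ℝ) - ((r : ℝ) + (p.2 : ℝ))) ^ 2 ≤ a q.1 - b p.2 := by
  intro q h
  induction h with
  | refl =>
    intro hp
    rw [hsol p hp, wt]
  | @tail y z hpy hstep ih =>
    intro hp
    have hyS : y ∈ S := hstep.1.1
    have hzS : z ∈ S := hstep.1.2.1
    have IH := ih hp
    rcases hstep.1.2.2 with hr | hc2
    · rw [← hr]
      exact IH
    · have hza : a z.1 = wt r z + b z.2 := by
        have := hsol z hzS; linarith
      have hyb : b y.2 = a y.1 - wt r y := by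
        have := hsol y hyS; linarith
      have h1 : (y.1 : ℝ) ≤ (z.1 : ℝ) := by exact_mod_cast hstep.2.1
      have h2 : (y.2 : ℝ) ≤ (p.2 : ℝ) := by exact_mod_cast (dr_le hpy).2
      have h3 : ((y.2 : ℝ)) = (z.2 : ℝ) := by exact_mod_cast hc2
      have e1 : b z.2 = b y.2 := congrArg b hc2.symm
      have expand : a z.1 - b p.2 = wt r z - wt r y + (a y.1 - b p.2) := by
        rw [hza, e1, hyb]; ring
      have h2z : ((z.2 : ℝ)) ≤ (p.2 : ℝ) := by rw [← h3]; exact h2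
      have quad : ((z.1:ℝ) - ((r:ℝ) + (p.2:ℝ)))^2 + wt r y
          ≤ ((y.1:ℝ) - ((r:ℝ) + (p.2:ℝ)))^2 + wt r z := by
        simp only [wt]
        rw [h3]
        nlinarith [mul_nonneg (sub_nonneg.mpr h1) (sub_nonneg.mpr h2z)]
      linarith [IH, expand, quad]

end N7

namespace N7

open Relation Finset

section Skew

variable {D : Finset (ℕ × ℕ)} (hskew : IsSkew (↑D : Set (ℕ × ℕ)))

include hskew

lemma skew_box {p q : ℕ × ℕ} (hp : p ∈ D) (hq : q ∈ D) {a b : ℕ}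
    (h1 : p.1 ≤ a) (h2 : a ≤ q.1) (h3 : p.2 ≤ b) (h4 : b ≤ q.2) : (a, b) ∈ D := by
  have := hskew p (by exact_mod_cast hp) q (by exact_mod_cast hq) a b h1 h2 h3 h4
  exact_mod_cast this

lemma comp_dichotomy {u v : ℕ × ℕ} (hu : u ∈ D) (hv : v ∈ D) (h : ¬ Conn D u v) :
    (u.1 < v.1 ∧ v.2 < u.2) ∨ (v.1 < u.1 ∧ u.2 < v.2) := by
  have hne1 : ¬(u.1 ≤ v.1 ∧ u.2 ≤ v.2) := by
    rintro ⟨ha, hb⟩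
    have hm : (u.1, v.2) ∈ D := skew_box hskew hu hv (le_refl _) ha hb (le_refl _)
    exact h (ReflTransGen.head ⟨hu, hm, Or.inl rfl⟩ (ReflTransGen.single ⟨hm, hv, Or.inr rfl⟩))
  have hne2 : ¬(v.1 ≤ u.1 ∧ v.2 ≤ u.2) := by
    rintro ⟨ha, hb⟩
    have hm : (v.1, u.2) ∈ D := skew_box hskew hv hu (le_refl _) ha hb (le_refl _)
    exact h (ReflTransGen.head ⟨hu, hm, Or.inr rfl⟩ (ReflTransGen.single ⟨hm, hv, Or.inl rfl⟩))
  omega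

lemma dir_const {u : ℕ × ℕ} (hu : u ∈ D) :
    ∀ {v v' : ℕ × ℕ}, Conn D v v' → v ∈ D → ¬ Conn D u v →
      v.1 < u.1 ∧ u.2 < v.2 → v'.1 < u.1 ∧ u.2 < v'.2 := by
  intro v v' h
  induction h with
  | refl => exact fun _ _ hd => hd
  | @tail y z hvy hstep ih =>
    intro hv hnc hd
    have hy := ih hv hnc hd
    have hncy : ¬ Conn D u y := fun hc => hnc (hc.trans (conn_symm hvy))
    have hncz : ¬ Conn D u z := fun hc => hnc (hc.trans (conn_symm (hvy.tail hstep)))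
    rcases comp_dichotomy hskew hu hstep.2.1 hncz with hz | hz
    · exfalso
      rcases hstep.2.2 with hr | hc2 <;> omega
    · exact hz

lemma between_same_comp {p q z : ℕ × ℕ} (hp : p ∈ D) (hq : q ∈ D) (hz : z ∈ D)
    (hpq : Conn D p q) (hb1 : p.1 ≤ z.1) (hb2 : z.2 ≤ p.2) (hb3 : z.1 ≤ q.1)
    (hb4 : q.2 ≤ z.2) : Conn D p z := by
  by_contra h
  have hzp : ¬ Conn D z p := fun hc => h (conn_symm hc)
  have hd : p.1 < z.1 ∧ z.2 < p.2 := by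
    have h1 : p.1 ≠ z.1 := fun he => h (ReflTransGen.single ⟨hp, hz, Or.inl he⟩)
    have h2 : p.2 ≠ z.2 := fun he => h (ReflTransGen.single ⟨hp, hz, Or.inr he⟩)
    rcases comp_dichotomy hskew hz hp hzp with hx | hx <;> omega
  have := dir_const hskew hz hpq hp hzp hd
  omega

lemma box_bounds {r c : ℕ} (hocc : Occupies (↑D : Set (ℕ × ℕ)) r c) {p : ℕ × ℕ}
    (hp : p ∈ D) : 1 ≤ p.1 ∧ p.1 ≤ r ∧ 1 ≤ p.2 ∧ p.2 ≤ c :=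
  hocc.1 p (by exact_mod_cast hp)

/-- the corridor lemma: between two connected boxes of a skew diagram forming a strict
descent, there is a third box of the diagram in the corridor. -/
lemma corridor {r c : ℕ} (hocc : Occupies (↑D : Set (ℕ × ℕ)) r c) {p q : ℕ × ℕ} (hp : p ∈ D) (hq : q ∈ D) (hConn : Conn D p q)
    (h1 : p.1 < q.1) (h2 : q.2 < p.2) :
    ∃ d ∈ D, p.1 ≤ d.1 ∧ d.1 ≤ q.1 ∧ q.2 ≤ d.2 ∧ d.2 ≤ p.2 ∧ d ≠ p ∧ d ≠ q := by
  have hpb := box_bounds hskew hocc hp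
  have hqb := box_bounds hskew hocc hq
  by_cases hB : p.1 + 1 < q.1
  · -- use a box in row p.1 + 1
    obtain ⟨y, hy⟩ := hocc.2.1 (p.1 + 1) (by omega) (by omega)
    have hyD : (p.1 + 1, y) ∈ D := by exact_mod_cast hy
    rcases lt_trichotomy y q.2 with hlt | heq | hgt
    · refine ⟨(p.1 + 1, q.2), skew_box hskew hyD hq (by simp) (by omega) (by omega)
        (le_refl _), by exact ⟨by omega, by omega, by omega, by omega, by simp only [ne_eq, Prod.ext_iff]; omega, by simp only [ne_eq, Prod.ext_iff]; omega⟩⟩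
    · refine ⟨(p.1 + 1, y), hyD, by exact ⟨by omega, by omega, by omega, by omega, by simp only [ne_eq, Prod.ext_iff]; omega, by simp only [ne_eq, Prod.ext_iff]; omega⟩⟩
    · by_cases hyp2 : y ≤ p.2
      · refine ⟨(p.1 + 1, y), hyD, by exact ⟨by omega, by omega, by omega, by omega, by simp only [ne_eq, Prod.ext_iff]; omega, by simp only [ne_eq, Prod.ext_iff]; omega⟩⟩
      · refine ⟨(p.1 + 1, p.2), skew_box hskew hp hyD (by simp) (by simp) (le_refl _)
          (by omega), by exact ⟨by omega, by omega, by omega, by omega, by simp only [ne_eq, Prod.ext_iff]; omega, by simp only [ne_eq, Prod.ext_iff]; omega⟩⟩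
  · by_cases hC : q.2 + 1 < p.2
    · -- use a box in column p.2 - 1
      obtain ⟨x, hx⟩ := hocc.2.2 (p.2 - 1) (by omega) (by omega)
      have hxD : (x, p.2 - 1) ∈ D := by exact_mod_cast hx
      rcases lt_trichotomy x p.1 with hlt | heq | hgt
      · refine ⟨(p.1, p.2 - 1), skew_box hskew hxD hp (by omega) (le_refl _) (by simp)
          (by omega), by exact ⟨by omega, by omega, by omega, by omega, by simp only [ne_eq, Prod.ext_iff]; omega, by simp only [ne_eq, Prod.ext_iff]; omega⟩⟩
      · refine ⟨(x, p.2 - 1), hxD, by exact ⟨by omega, by omega, by omega, by omega, by simp only [ne_eq, Prod.ext_iff]; omega, by simp only [ne_eq, Prod.ext_iff]; omega⟩⟩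
      · by_cases hxq : x ≤ q.1
        · refine ⟨(x, p.2 - 1), hxD, by exact ⟨by omega, by omega, by omega, by omega, by simp only [ne_eq, Prod.ext_iff]; omega, by simp only [ne_eq, Prod.ext_iff]; omega⟩⟩
        · refine ⟨(q.1, p.2 - 1), skew_box hskew hq hxD (le_refl _) (by omega)
            (by omega) (by simp), by exact ⟨by omega, by omega, by omega, by omega, by simp only [ne_eq, Prod.ext_iff]; omega, by simp only [ne_eq, Prod.ext_iff]; omega⟩⟩
    · -- tight case: q = (p.1+1, p.2-1) ; cut argument
      have hq1 : q.1 = p.1 + 1 := by omega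
      have hq2 : q.2 + 1 = p.2 := by omega
      by_cases hd1 : (p.1, q.2) ∈ D
      · exact ⟨(p.1, q.2), hd1, by exact ⟨by omega, by omega, by omega, by omega, by simp only [ne_eq, Prod.ext_iff]; omega, by simp only [ne_eq, Prod.ext_iff]; omega⟩⟩
      by_cases hd2 : (q.1, p.2) ∈ D
      · exact ⟨(q.1, p.2), hd2, by exact ⟨by omega, by omega, by omega, by omega, by simp only [ne_eq, Prod.ext_iff]; omega, by simp only [ne_eq, Prod.ext_iff]; omega⟩⟩
      exfalso
      -- every box lies on one side of the cut
      have hside : ∀ m ∈ D, (m.1 ≤ p.1 ∧ p.2 ≤ m.2) ∨ (q.1 ≤ m.1 ∧ m.2 ≤ q.2) := by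
        intro m hm
        by_cases ha : m.1 ≤ p.1 ∧ m.2 ≤ q.2
        · exact absurd (skew_box hskew hm hq ha.1 (by omega) ha.2 (le_refl _)) hd1
        by_cases hb : q.1 ≤ m.1 ∧ p.2 ≤ m.2
        · exact absurd (skew_box hskew hp hm (by omega) hb.1 (le_refl _) hb.2) hd2
        omega
      -- connectivity cannot cross the cut
      have hstay : ∀ z : ℕ × ℕ, Conn D p z → z.1 ≤ p.1 ∧ p.2 ≤ z.2 := by
        intro z h
        induction h with
        | refl => exact ⟨le_refl _, le_refl _⟩
        | @tail y z' hpy hstep ih =>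
          have hy := ih
          have hz' := hside z' hstep.2.1
          rcases hstep.2.2 with hr | hc2 <;> omega
      have := hstay q hConn
      omega
  
end Skew

end N7

namespace N7

open Relation Finset Function

section Restrict

variable {S D : Finset (ℕ × ℕ)}

noncomputable def quotMap2 (h : S ⊆ D) :
    Quot (sameComp (↑S : Set (ℕ × ℕ))) → Quot (sameComp (↑D : Set (ℕ × ℕ))) :=
  Quot.map (Set.inclusion (by exact_mod_cast h))
    (fun a b hab => by
      induction hab with
      | refl => exact ReflTransGen.refl
      | tail _ hstep ih => exact ReflTransGen.tail ih hstep)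

lemma quotMap2_mk (h : S ⊆ D) (x : (↑S : Set (ℕ × ℕ))) :
    quotMap2 h (Quot.mk _ x) = Quot.mk _ (Set.inclusion (by exact_mod_cast h) x) := rfl

lemma quotMap2_surjective (h : S ⊆ D) (hrows : ∀ d ∈ D, ∃ s ∈ S, s.1 = d.1) :
    Surjective (quotMap2 h) := by
  intro y
  induction y using Quot.ind with | _ b =>
  obtain ⟨s, hs, hs1⟩ := hrows b (by exact_mod_cast b.2)
  refine ⟨Quot.mk _ ⟨s, by exact_mod_cast hs⟩, ?_⟩
  rw [quotMap2_mk]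
  exact Quot.sound (ReflTransGen.single (Or.inl hs1))

lemma compCount_le_of_sub (h : S ⊆ D) (hrows : ∀ d ∈ D, ∃ s ∈ S, s.1 = d.1) :
    compCount (↑D : Set (ℕ × ℕ)) ≤ compCount (↑S : Set (ℕ × ℕ)) :=
  Nat.card_le_card_of_surjective _ (quotMap2_surjective h hrows)

lemma conn_restrict (h : S ⊆ D) (hrows : ∀ d ∈ D, ∃ s ∈ S, s.1 = d.1)
    (hcc : compCount (↑S : Set (ℕ × ℕ)) = compCount (↑D : Set (ℕ × ℕ))) :
    ∀ x y : ℕ × ℕ, x ∈ S → y ∈ S → Conn D x y → Conn S x y := by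
  have hbij : Function.Bijective (quotMap2 h) :=
    (Nat.bijective_iff_surjective_and_card _).mpr ⟨quotMap2_surjective h hrows, hcc⟩
  intro x y hx hy hconn
  have h1 : sameComp (↑D : Set (ℕ × ℕ)) ⟨x, by exact_mod_cast h hx⟩ ⟨y, by exact_mod_cast h hy⟩ :=
    sameComp_of_conn hconn (h hx) (h hy)
  have h2 : quotMap2 h (Quot.mk _ ⟨x, by exact_mod_cast hx⟩)
      = quotMap2 h (Quot.mk _ ⟨y, by exact_mod_cast hy⟩) := by
    rw [quotMap2_mk, quotMap2_mk]
    exact Quot.sound h1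
  have h3 := hbij.1 h2
  have h4 := ((sameComp_equiv _).eqvGen_iff).mp (Quot.eqvGen_exact h3)
  exact conn_of_sameComp h4

end Restrict

end N7

namespace N7

open Relation Finset Function

section Addable

variable {D M : Finset (ℕ × ℕ)}

lemma mem_swap {x : ℕ × ℕ} : x ∈ M.image Prod.swap ↔ (x.2, x.1) ∈ M := by
  constructor
  · rintro h
    obtain ⟨y, hy, rfl⟩ := Finset.mem_image.mp h
    simpa using hy
  · intro h
    refine Finset.mem_image.mpr ⟨(x.2, x.1), h, rfl⟩

lemma nc_swap (h : NC M) : NC (M.image Prod.swap) := by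
  rintro p hp q hq ⟨h1, h2⟩
  rw [mem_swap] at hp hq
  exact h _ hp _ hq ⟨h2, h1⟩

lemma skew_swap (hskew : IsSkew (↑D : Set (ℕ × ℕ))) :
    IsSkew (↑(D.image Prod.swap) : Set (ℕ × ℕ)) := by
  intro p hp q hq a b h1 h2 h3 h4
  have hp' : (p.2, p.1) ∈ D := by rw [← mem_swap]; exact_mod_cast hp
  have hq' : (q.2, q.1) ∈ D := by rw [← mem_swap]; exact_mod_cast hq
  have : (b, a) ∈ D := skew_box hskew hp' hq' h3 h4 h1 h2
  have : (a, b) ∈ D.image Prod.swap := mem_swap.mpr this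
  exact_mod_cast this

lemma addable_row (hskew : IsSkew (↑D : Set (ℕ × ℕ))) (hMD : M ⊆ D) (hMnc : NC M)
    {i j₀ : ℕ} (hij0 : (i, j₀) ∈ D) (hi : ∀ z ∈ M, z.1 ≠ i) :
    ∃ j, (i, j) ∈ D ∧ NC (insert (i, j) M) := by
  classical
  set A' := (M.filter (fun z => z.1 < i)).image Prod.snd with hA'def
  set B' := (M.filter (fun z => i < z.1)).image Prod.snd with hB'def
  have hAB : ∀ a ∈ A', ∀ b ∈ B', b ≤ a := by
    intro a ha b hb
    obtain ⟨u, hu, rfl⟩ := Finset.mem_image.mp ha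
    obtain ⟨l, hl, rfl⟩ := Finset.mem_image.mp hb
    have hu' := Finset.mem_filter.mp hu
    have hl' := Finset.mem_filter.mp hl
    have := hMnc u hu'.1 l hl'.1
    have h1 : u.1 < l.1 := by omega
    omega
  -- a box of D in row i whose column is  ≥ everything in B' and ≤ everything in A'
  have key : ∃ j, (i, j) ∈ D ∧ (∀ a ∈ A', j ≤ a) ∧ (∀ b ∈ B', b ≤ j) := by
    by_cases hA : A'.Nonempty
    · obtain ⟨u, hu, hum⟩ := Finset.mem_image.mp (A'.min'_mem hA)
      have hu' := Finset.mem_filter.mp hu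
      by_cases hB : B'.Nonempty
      · obtain ⟨l, hl, hlm⟩ := Finset.mem_image.mp (B'.max'_mem hB)
        have hl' := Finset.mem_filter.mp hl
        have hm21 : B'.max' hB ≤ A'.min' hA := hAB _ (A'.min'_mem hA) _ (B'.max'_mem hB)
        rcases le_or_gt j₀ (A'.min' hA) with h1 | h1
        · rcases le_or_gt (B'.max' hB) j₀ with h2 | h2
          · exact ⟨j₀, hij0, fun a ha => h1.trans (A'.min'_le a ha),
              fun b hb => (B'.le_max' b hb).trans h2⟩
          · refine ⟨B'.max' hB, ?_, fun a ha => hm21.trans (A'.min'_le a ha),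
              fun b hb => B'.le_max' b hb⟩
            exact skew_box hskew hij0 (hMD hl'.1) (le_refl i) (le_of_lt hl'.2)
              (le_of_lt h2) (le_of_eq hlm.symm)
        · refine ⟨A'.min' hA, ?_, fun a ha => A'.min'_le a ha,
            fun b hb => hAB _ (A'.min'_mem hA) b hb⟩
          exact skew_box hskew (hMD hu'.1) hij0 (le_of_lt hu'.2) (le_refl i)
            (le_of_eq hum) (le_of_lt h1)
      · rcases le_or_gt j₀ (A'.min' hA) with h1 | h1
        · exact ⟨j₀, hij0, fun a ha => h1.trans (A'.min'_le a ha),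
            fun b hb => absurd ⟨b, hb⟩ hB⟩
        · refine ⟨A'.min' hA, ?_, fun a ha => A'.min'_le a ha,
            fun b hb => absurd ⟨b, hb⟩ hB⟩
          exact skew_box hskew (hMD hu'.1) hij0 (le_of_lt hu'.2) (le_refl i)
            (le_of_eq hum) (le_of_lt h1)
    · by_cases hB : B'.Nonempty
      · obtain ⟨l, hl, hlm⟩ := Finset.mem_image.mp (B'.max'_mem hB)
        have hl' := Finset.mem_filter.mp hl
        rcases le_or_gt (B'.max' hB) j₀ with h2 | h2
        · exact ⟨j₀, hij0, fun a ha => absurd ⟨a, ha⟩ hA,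
            fun b hb => (B'.le_max' b hb).trans h2⟩
        · refine ⟨B'.max' hB, ?_, fun a ha => absurd ⟨a, ha⟩ hA,
            fun b hb => B'.le_max' b hb⟩
          exact skew_box hskew hij0 (hMD hl'.1) (le_refl i) (le_of_lt hl'.2)
            (le_of_lt h2) (le_of_eq hlm.symm)
      · exact ⟨j₀, hij0, fun a ha => absurd ⟨a, ha⟩ hA, fun b hb => absurd ⟨b, hb⟩ hB⟩
  obtain ⟨j, hjD, hjA, hjB⟩ := key
  refine ⟨j, hjD, ?_⟩
  intro x hx y hy
  rcases Finset.mem_insert.mp hx with rfl | hxM <;> rcases Finset.mem_insert.mp hy with rfl | hyM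
  · omega
  · rintro ⟨ha, hb⟩
    have : y.2 ∈ B' := Finset.mem_image_of_mem _ (Finset.mem_filter.mpr ⟨hyM, ha⟩)
    have := hjB y.2 this
    omega
  · rintro ⟨ha, hb⟩
    have : x.2 ∈ A' := Finset.mem_image_of_mem _ (Finset.mem_filter.mpr ⟨hxM, ha⟩)
    have := hjA x.2 this
    omega
  · exact hMnc x hxM y hyM

lemma addable_col (hskew : IsSkew (↑D : Set (ℕ × ℕ))) (hMD : M ⊆ D) (hMnc : NC M)
    {j x₀ : ℕ} (hx0 : (x₀, j) ∈ D) (hj : ∀ z ∈ M, z.2 ≠ j) :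
    ∃ x, (x, j) ∈ D ∧ NC (insert (x, j) M) := by
  have h1 : (j, x₀) ∈ D.image Prod.swap := mem_swap.mpr hx0
  have h2 : ∀ z ∈ M.image Prod.swap, z.1 ≠ j := by
    intro z hz
    rw [mem_swap] at hz
    exact hj _ hz
  obtain ⟨x, hxD, hxnc⟩ := addable_row (skew_swap hskew)
    (Finset.image_subset_image hMD) (nc_swap hMnc) h1 h2
  refine ⟨x, ?_, ?_⟩
  · have := mem_swap.mp hxD
    simpa using this
  · intro p hp q hq hcross
    have hins : insert (j, x) (M.image Prod.swap) = (insert (x, j) M).image Prod.swap := by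
      rw [Finset.image_insert]
      rfl
    rw [hins] at hxnc
    exact hxnc (p.2, p.1) (mem_swap.mpr (by simpa using hp))
      (q.2, q.1) (mem_swap.mpr (by simpa using hq)) ⟨hcross.2, hcross.1⟩
  
end Addable

end N7

namespace N7

open Relation Finset Function

theorem exists_nasf {D : Finset (ℕ × ℕ)} {r c k : ℕ}
    (hskew : IsSkew (↑D : Set (ℕ × ℕ))) (hocc : Occupies (↑D : Set (ℕ × ℕ)) r c)
    (hk : compCount (↑D : Set (ℕ × ℕ)) = k)
    {T : Finset (ℕ × ℕ)} (hTD : T ⊆ D) (hTnc : NC T) :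
    ∃ S : Finset (ℕ × ℕ), IsNASF D r c k S ∧ T ⊆ S := by
  classical
  set C := D.powerset.filter (fun M => T ⊆ M ∧ NC M) with hCdef
  have hTC : T ∈ C := Finset.mem_filter.mpr ⟨Finset.mem_powerset.mpr hTD, subset_refl T, hTnc⟩
  obtain ⟨M, hMC, hMmax⟩ := C.exists_max_image Finset.card ⟨T, hTC⟩
  have hMD : M ⊆ D := Finset.mem_powerset.mp (Finset.mem_filter.mp hMC).1
  have hTM : T ⊆ M := (Finset.mem_filter.mp hMC).2.1
  have hMnc : NC M := (Finset.mem_filter.mp hMC).2.2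
  have hmax : ∀ d ∈ D, d ∉ M → ¬ NC (insert d M) := by
    intro d hd hdM hnc
    have hmem : insert d M ∈ C := Finset.mem_filter.mpr
      ⟨Finset.mem_powerset.mpr (Finset.insert_subset_iff.mpr ⟨hd, hMD⟩),
        hTM.trans (Finset.subset_insert _ _), hnc⟩
    have := hMmax _ hmem
    rw [Finset.card_insert_of_notMem hdM] at this
    omega
  have hrows : ∀ i, 1 ≤ i → i ≤ r → ∃ j, (i, j) ∈ M := by
    intro i h1 h2
    by_contra hno
    push_neg at hno
    have hi : ∀ z ∈ M, z.1 ≠ i := by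
      intro z hz he
      apply hno z.2
      rw [← he]
      exact hz
    obtain ⟨j₀, hj₀⟩ := hocc.2.1 i h1 h2
    obtain ⟨j, hjD, hjnc⟩ := addable_row hskew hMD hMnc (by exact_mod_cast hj₀) hi
    exact hmax (i, j) hjD (hno j) hjnc
  have hcols : ∀ j, 1 ≤ j → j ≤ c → ∃ i, (i, j) ∈ M := by
    intro j h1 h2
    by_contra hno
    push_neg at hno
    have hj : ∀ z ∈ M, z.2 ≠ j := by
      intro z hz he
      apply hno z.1
      rw [← he]
      exact hz
    obtain ⟨x₀, hx₀⟩ := hocc.2.2 j h1 h2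
    obtain ⟨x, hxD, hxnc⟩ := addable_col hskew hMD hMnc (by exact_mod_cast hx₀) hj
    exact hmax (x, j) hxD (hno x) hxnc
  have hnob : ∀ p q : ℕ × ℕ, p ∈ M → q ∈ M → Conn D p q → Conn M p q := by
    by_contra hno
    push_neg at hno
    set P := (M ×ˢ M).filter (fun pq =>
      Conn D pq.1 pq.2 ∧ ¬ Conn M pq.1 pq.2 ∧ pq.1.1 < pq.2.1 ∧ pq.2.2 < pq.1.2) with hPdef
    have hPne : P.Nonempty := by
      obtain ⟨p, q, hp, hq, hD, hM⟩ := hno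
      have hne_row : p.1 ≠ q.1 := fun h => hM (ReflTransGen.single ⟨hp, hq, Or.inl h⟩)
      have hne_col : p.2 ≠ q.2 := fun h => hM (ReflTransGen.single ⟨hp, hq, Or.inr h⟩)
      rcases nc_compare hMnc hp hq with h | h
      · exact ⟨(p, q), Finset.mem_filter.mpr ⟨Finset.mem_product.mpr ⟨hp, hq⟩,
          hD, hM, show p.1 < q.1 by omega, show q.2 < p.2 by omega⟩⟩
      · exact ⟨(q, p), Finset.mem_filter.mpr ⟨Finset.mem_product.mpr ⟨hq, hp⟩,
          conn_symm hD, fun hc => hM (conn_symm hc), show q.1 < p.1 by omega,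
          show p.2 < q.2 by omega⟩⟩
    obtain ⟨pq, hpqP, hpqmin⟩ :=
      P.exists_min_image (fun pq => (pq.2.1 - pq.1.1) + (pq.1.2 - pq.2.2)) hPne
    obtain ⟨p, q⟩ := pq
    have hfilt := Finset.mem_filter.mp hpqP
    have hpM : p ∈ M := (Finset.mem_product.mp hfilt.1).1
    have hqM : q ∈ M := (Finset.mem_product.mp hfilt.1).2
    have hDpq : Conn D p q := hfilt.2.1
    have hMpq : ¬ Conn M p q := hfilt.2.2.1
    have hlt1 : p.1 < q.1 := hfilt.2.2.2.1
    have hlt2 : q.2 < p.2 := hfilt.2.2.2.2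
    have hnb : ∀ z ∈ M, z ≠ p → z ≠ q →
        ¬(p.1 ≤ z.1 ∧ z.2 ≤ p.2 ∧ z.1 ≤ q.1 ∧ q.2 ≤ z.2) := by
      rintro z hzM hzp hzq ⟨hb1, hb2, hb3, hb4⟩
      have hzD : Conn D p z := between_same_comp hskew (hMD hpM) (hMD hqM) (hMD hzM)
        hDpq hb1 hb2 hb3 hb4
      by_cases hzM' : Conn M p z
      · have hrow : z.1 ≠ q.1 := fun h =>
          hMpq (hzM'.trans (ReflTransGen.single ⟨hzM, hqM, Or.inl h⟩))
        have hcol : z.2 ≠ q.2 := fun h =>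
          hMpq (hzM'.trans (ReflTransGen.single ⟨hzM, hqM, Or.inr h⟩))
        have hmem : (z, q) ∈ P := Finset.mem_filter.mpr ⟨Finset.mem_product.mpr ⟨hzM, hqM⟩,
          (conn_symm hzD).trans hDpq, fun hc => hMpq (hzM'.trans hc),
          show z.1 < q.1 by omega, show q.2 < z.2 by omega⟩
        have hd : (q.1 - p.1) + (p.2 - q.2) ≤ (q.1 - z.1) + (z.2 - q.2) := hpqmin (z, q) hmem
        have hne : z.1 ≠ p.1 ∨ z.2 ≠ p.2 := by
          by_contra hcon
          push_neg at hcon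
          exact hzp (Prod.ext hcon.1 hcon.2)
        omega
      · have hrow : p.1 ≠ z.1 := fun h => hzM' (ReflTransGen.single ⟨hpM, hzM, Or.inl h⟩)
        have hcol : p.2 ≠ z.2 := fun h => hzM' (ReflTransGen.single ⟨hpM, hzM, Or.inr h⟩)
        have hmem : (p, z) ∈ P := Finset.mem_filter.mpr ⟨Finset.mem_product.mpr ⟨hpM, hzM⟩,
          hzD, hzM', show p.1 < z.1 by omega, show z.2 < p.2 by omega⟩
        have hd : (q.1 - p.1) + (p.2 - q.2) ≤ (z.1 - p.1) + (p.2 - z.2) := hpqmin (p, z) hmem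
        have hne : z.1 ≠ q.1 ∨ z.2 ≠ q.2 := by
          by_contra hcon
          push_neg at hcon
          exact hzq (Prod.ext hcon.1 hcon.2)
        omega
    obtain ⟨d, hdD, hc1, hc2, hc3, hc4, hdp, hdq⟩ :=
      corridor hskew hocc (hMD hpM) (hMD hqM) hDpq hlt1 hlt2
    have hdM : d ∉ M := fun hm => hnb d hm hdp hdq ⟨hc1, hc4, hc2, hc3⟩
    apply hmax d hdD hdM
    intro x hx y hy
    rcases Finset.mem_insert.mp hx with rfl | hxM <;>
      rcases Finset.mem_insert.mp hy with rfl | hyM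
    · omega
    · rintro ⟨ha, hb⟩
      rcases nc_compare hMnc hyM hpM with hyp | hpy
      · omega
      · rcases nc_compare hMnc hyM hqM with hyq | hqy
        · by_cases hyp' : y = p
          · rw [hyp'] at ha; omega
          by_cases hyq' : y = q
          · rw [hyq'] at hb; omega
          exact hnb y hyM hyp' hyq' ⟨hpy.1, hpy.2, hyq.1, hyq.2⟩
        · omega
    · rintro ⟨ha, hb⟩
      rcases nc_compare hMnc hxM hpM with hxp | hpx
      · omega
      · rcases nc_compare hMnc hxM hqM with hxq | hqx
        · by_cases hxp' : x = p
          · rw [hxp'] at hb; omega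
          by_cases hxq' : x = q
          · rw [hxq'] at ha; omega
          exact hnb x hxM hxp' hxq' ⟨hpx.1, hpx.2, hxq.1, hxq.2⟩
        · omega
    · exact hMnc x hxM y hyM
  have hacy : RowColAcyclic M := nc_acyclic hMnc
  have himgf : M.image Prod.fst = Finset.Icc 1 r := by
    ext i
    simp only [Finset.mem_image, Finset.mem_Icc]
    constructor
    · rintro ⟨z, hz, rfl⟩
      have := box_bounds hskew hocc (hMD hz)
      exact ⟨this.1, this.2.1⟩
    · rintro ⟨h1, h2⟩
      obtain ⟨j, hj⟩ := hrows i h1 h2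
      exact ⟨(i, j), hj, rfl⟩
  have himgs : M.image Prod.snd = Finset.Icc 1 c := by
    ext j
    simp only [Finset.mem_image, Finset.mem_Icc]
    constructor
    · rintro ⟨z, hz, rfl⟩
      have := box_bounds hskew hocc (hMD hz)
      exact ⟨this.2.2.1, this.2.2.2⟩
    · rintro ⟨h1, h2⟩
      obtain ⟨i, hi⟩ := hcols j h1 h2
      exact ⟨(i, j), hi, rfl⟩
  have hcard : compCount (↑M : Set (ℕ × ℕ)) + M.card = r + c := by
    have := compCount_add_card M hacy
    rw [himgf, himgs] at this
    rw [this, Nat.card_Icc, Nat.card_Icc]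
    omega
  have hsur : ∀ d ∈ D, ∃ s ∈ M, s.1 = d.1 := by
    intro d hd
    have hb := box_bounds hskew hocc hd
    obtain ⟨j, hj⟩ := hrows d.1 hb.1 hb.2.1
    exact ⟨(d.1, j), hj, rfl⟩
  have hle : compCount (↑D : Set (ℕ × ℕ)) ≤ compCount (↑M : Set (ℕ × ℕ)) :=
    compCount_le_of_sub hMD hsur
  have hinj : Function.Injective (quotMap2 hMD) := by
    intro x y
    induction x using Quot.ind with | _ a =>
    induction y using Quot.ind with | _ b =>
    intro h
    rw [quotMap2_mk, quotMap2_mk] at h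
    have h2 := ((sameComp_equiv _).eqvGen_iff).mp (Quot.eqvGen_exact h)
    have h3 : Conn D a.1 b.1 := conn_of_sameComp h2
    have h4 : Conn M a.1 b.1 := hnob _ _ (by exact_mod_cast a.2) (by exact_mod_cast b.2) h3
    exact Quot.sound (sameComp_of_conn h4 (by exact_mod_cast a.2) (by exact_mod_cast b.2))
  have hge : compCount (↑M : Set (ℕ × ℕ)) ≤ compCount (↑D : Set (ℕ × ℕ)) :=
    Nat.card_le_card_of_injective _ hinj
  have hccM : compCount (↑M : Set (ℕ × ℕ)) = k := by omega
  exact ⟨M, ⟨hMD, by omega, hrows, hcols, hacy, hMnc⟩, hTM⟩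

end N7

namespace N7

open Relation Finset Function

variable {E : Type*} [AddCommGroup E] [Module ℝ E]

/-- representation of points of the convex hull of a finite image. -/
lemma hull_rep (f : ℕ × ℕ → E) (D : Finset (ℕ × ℕ)) (x : E) :
    x ∈ convexHull ℝ (f '' (↑D : Set (ℕ × ℕ))) ↔
      ∃ w : ℕ × ℕ → ℝ, (∀ d ∈ D, 0 ≤ w d) ∧ ∑ d ∈ D, w d = 1 ∧ ∑ d ∈ D, w d • f d = x := by
  classical
  constructor
  · intro hx
    have hmin : convexHull ℝ (f '' (↑D : Set (ℕ × ℕ))) ⊆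
        {y : E | ∃ w : ℕ × ℕ → ℝ,
          (∀ d ∈ D, 0 ≤ w d) ∧ ∑ d ∈ D, w d = 1 ∧ ∑ d ∈ D, w d • f d = y} := by
      refine convexHull_min ?_ ?_
      swap
      · rintro y hy z hz a b ha hb hab
        obtain ⟨wy, hy0, hy1, hyx⟩ := hy
        obtain ⟨wz, hz0, hz1, hzx⟩ := hz
        refine ⟨fun e => a * wy e + b * wz e,
          fun e he => by have := hy0 e he; have := hz0 e he; positivity, ?_, ?_⟩
        · rw [Finset.sum_add_distrib, ← Finset.mul_sum, ← Finset.mul_sum, hy1, hz1]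
          simpa using hab
        · rw [show (∑ e ∈ D, (a * wy e + b * wz e) • f e)
              = a • ∑ e ∈ D, wy e • f e + b • ∑ e ∈ D, wz e • f e by
            rw [Finset.smul_sum, Finset.smul_sum, ← Finset.sum_add_distrib]
            refine Finset.sum_congr rfl fun e _ => ?_
            rw [add_smul, smul_smul, smul_smul]]
          rw [hyx, hzx]
      rintro _ ⟨d, hd, rfl⟩
      refine ⟨fun e => if e = d then 1 else 0, fun e _ => by positivity, ?_, ?_⟩
      · rw [Finset.sum_ite_eq' D d (fun _ => (1:ℝ))]
        simp [Finset.mem_coe.mp hd]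
      · rw [show (∑ e ∈ D, (if e = d then (1:ℝ) else 0) • f e)
            = ∑ e ∈ D, (if e = d then f e else 0) by
          refine Finset.sum_congr rfl fun e _ => ?_
          split <;> simp]
        rw [Finset.sum_ite_eq' D d f]
        simp [Finset.mem_coe.mp hd]
    exact hmin hx
  · rintro ⟨w, hw0, hw1, rfl⟩
    rw [← Finset.centerMass_eq_of_sum_1 _ f hw1]
    exact Finset.centerMass_mem_convexHull _ hw0 (by rw [hw1]; norm_num)
      (fun i hi => Set.mem_image_of_mem f (Finset.mem_coe.mpr hi))

section NatFunBasic

variable {D : Finset (ℕ × ℕ)} {r c : ℕ}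

/-- the lifted vertex map. -/
noncomputable def lv (r c : ℕ) (q : ℕ × ℕ) : (Fin (r + c) → ℝ) × ℝ :=
  (boxVec r c q, wt r q)

lemma natFun_eq (x : Fin (r + c) → ℝ) :
    natFun D r c x = sSup {t : ℝ | (x, t) ∈ convexHull ℝ (lv r c '' (↑D : Set (ℕ × ℕ)))} :=
  rfl

/-- slice membership from a weight function. -/
lemma slice_of_rep {x : Fin (r + c) → ℝ} {w : ℕ × ℕ → ℝ} (hw0 : ∀ d ∈ D, 0 ≤ w d)
    (hw1 : ∑ d ∈ D, w d = 1) (hwx : ∑ d ∈ D, w d • boxVec r c d = x) :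
    (x, ∑ d ∈ D, w d * wt r d) ∈ convexHull ℝ (lv r c '' (↑D : Set (ℕ × ℕ))) := by
  rw [hull_rep (lv r c) D]
  refine ⟨w, hw0, hw1, ?_⟩
  rw [Prod.ext_iff]
  constructor
  · rw [Prod.fst_sum]
    simpa only [lv, Prod.smul_mk] using hwx
  · rw [Prod.snd_sum]
    simp only [lv, Prod.smul_mk, smul_eq_mul]

/-- any slice element comes from a weight function. -/
lemma rep_of_slice {x : Fin (r + c) → ℝ} {t : ℝ}
    (h : (x, t) ∈ convexHull ℝ (lv r c '' (↑D : Set (ℕ × ℕ)))) :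
    ∃ w : ℕ × ℕ → ℝ, (∀ d ∈ D, 0 ≤ w d) ∧ ∑ d ∈ D, w d = 1 ∧
      ∑ d ∈ D, w d • boxVec r c d = x ∧ ∑ d ∈ D, w d * wt r d = t := by
  rw [hull_rep (lv r c) D] at h
  obtain ⟨w, hw0, hw1, hwx⟩ := h
  refine ⟨w, hw0, hw1, ?_, ?_⟩
  · have := congrArg Prod.fst hwx
    rw [Prod.fst_sum] at this
    simpa only [lv, Prod.smul_mk] using this
  · have := congrArg Prod.snd hwx
    rw [Prod.snd_sum] at this
    simpa only [lv, Prod.smul_mk, smul_eq_mul] using this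

/-- upper bound for slices. -/
lemma slice_bddAbove (hne : D.Nonempty) (x : Fin (r + c) → ℝ) :
    BddAbove {t : ℝ | (x, t) ∈ convexHull ℝ (lv r c '' (↑D : Set (ℕ × ℕ)))} := by
  classical
  refine ⟨(D.image (wt r)).max' (hne.image _), ?_⟩
  rintro t ht
  obtain ⟨w, hw0, hw1, hwx, hwt⟩ := rep_of_slice ht
  rw [← hwt]
  calc ∑ d ∈ D, w d * wt r d ≤ ∑ d ∈ D, w d * (D.image (wt r)).max' (hne.image _) := by
        refine Finset.sum_le_sum fun d hd => ?_
        exact mul_le_mul_of_nonneg_left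
          ((D.image (wt r)).le_max' _ (Finset.mem_image_of_mem _ hd)) (hw0 d hd)
    _ = (D.image (wt r)).max' (hne.image _) := by
        rw [← Finset.sum_mul, hw1, one_mul]

lemma slice_nonempty {x : Fin (r + c) → ℝ}
    (hx : x ∈ convexHull ℝ (boxVec r c '' (↑D : Set (ℕ × ℕ)))) :
    {t : ℝ | (x, t) ∈ convexHull ℝ (lv r c '' (↑D : Set (ℕ × ℕ)))}.Nonempty := by
  obtain ⟨w, hw0, hw1, hwx⟩ := (hull_rep (boxVec r c) D x).mp hx
  exact ⟨_, slice_of_rep hw0 hw1 hwx⟩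

lemma slice_isClosed (x : Fin (r + c) → ℝ) :
    IsClosed {t : ℝ | (x, t) ∈ convexHull ℝ (lv r c '' (↑D : Set (ℕ × ℕ)))} := by
  have h1 : IsClosed (convexHull ℝ (lv r c '' (↑D : Set (ℕ × ℕ)))) :=
    Set.Finite.isClosed_convexHull (𝕜 := ℝ) ((D.finite_toSet).image _)
  exact h1.preimage (Continuous.prodMk_right x)

/-- the sup is attained. -/
lemma natFun_mem (hne : D.Nonempty) {x : Fin (r + c) → ℝ}
    (hx : x ∈ convexHull ℝ (boxVec r c '' (↑D : Set (ℕ × ℕ)))) :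
    (x, natFun D r c x) ∈ convexHull ℝ (lv r c '' (↑D : Set (ℕ × ℕ))) :=
  (slice_isClosed x).csSup_mem (slice_nonempty hx) (slice_bddAbove hne x)

lemma le_natFun (hne : D.Nonempty) {x : Fin (r + c) → ℝ} {t : ℝ}
    (ht : (x, t) ∈ convexHull ℝ (lv r c '' (↑D : Set (ℕ × ℕ)))) : t ≤ natFun D r c x :=
  le_csSup (slice_bddAbove hne x) ht

/-- concavity. -/
lemma natFun_concave (hne : D.Nonempty) :
    ConcaveOn ℝ (convexHull ℝ (boxVec r c '' (↑D : Set (ℕ × ℕ)))) (natFun D r c) := by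
  refine ⟨convex_convexHull _ _, ?_⟩
  intro x hx y hy a b ha hb hab
  have hxm := natFun_mem hne hx
  have hym := natFun_mem hne hy
  have hcomb := (convex_convexHull ℝ (lv r c '' (↑D : Set (ℕ × ℕ)))) hxm hym ha hb hab
  have heq : a • (x, natFun D r c x) + b • (y, natFun D r c y)
      = (a • x + b • y, a * natFun D r c x + b * natFun D r c y) := by
    rw [Prod.smul_mk, Prod.smul_mk, Prod.mk_add_mk]
    rfl
  rw [heq] at hcomb
  have := le_natFun hne hcomb
  simpa using this

end NatFunBasic

end N7

namespace N7

open Relation Finset Function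

lemma sum_pick {n : ℕ} (m : ℕ) (hm : m < n) (g : Fin n → ℝ) :
    ∑ t : Fin n, g t * (if (t : ℕ) = m then (1:ℝ) else 0) = g ⟨m, hm⟩ := by
  classical
  rw [show (∑ t : Fin n, g t * (if (t:ℕ) = m then (1:ℝ) else 0))
      = ∑ t : Fin n, (if t = ⟨m, hm⟩ then g t else 0) from Finset.sum_congr rfl (fun t _ => by
        by_cases h : (t:ℕ) = m
        · rw [if_pos h, if_pos (Fin.ext h), mul_one]
        · rw [if_neg h, if_neg (fun he => h (by rw [he])), mul_zero])]
  rw [Finset.sum_ite_eq' Finset.univ _ g]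
  simp

noncomputable def linOf (r c : ℕ) (a b : ℕ → ℝ) : (Fin (r + c) → ℝ) →ₗ[ℝ] ℝ where
  toFun x := ∑ t : Fin (r + c),
    (if (t : ℕ) < r then a ((t : ℕ) + 1) else b ((t : ℕ) + 1 - r)) * x t
  map_add' x y := by
    simp only [Pi.add_apply, mul_add]
    rw [Finset.sum_add_distrib]
  map_smul' m x := by
    simp only [Pi.smul_apply, smul_eq_mul, RingHom.id_apply]
    rw [Finset.mul_sum]
    exact Finset.sum_congr rfl fun t _ => by ring

lemma linOf_boxVec {r c : ℕ} (a b : ℕ → ℝ) {d : ℕ × ℕ} (h1 : 1 ≤ d.1) (h2 : d.1 ≤ r)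
    (h3 : 1 ≤ d.2) (h4 : d.2 ≤ c) :
    linOf r c a b (boxVec r c d) = a d.1 - b d.2 := by
  have e0 : linOf r c a b (boxVec r c d) = ∑ t : Fin (r + c),
      ((if (t : ℕ) < r then a ((t : ℕ) + 1) else b ((t : ℕ) + 1 - r)) *
        ((if (t : ℕ) = d.1 - 1 then (1:ℝ) else 0)
          - (if (t : ℕ) = r + d.2 - 1 then (1:ℝ) else 0))) := rfl
  have e : linOf r c a b (boxVec r c d) = ∑ t : Fin (r + c),
      ((if (t : ℕ) < r then a ((t : ℕ) + 1) else b ((t : ℕ) + 1 - r)) *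
        (if (t : ℕ) = d.1 - 1 then (1:ℝ) else 0))
      - ∑ t : Fin (r + c),
      ((if (t : ℕ) < r then a ((t : ℕ) + 1) else b ((t : ℕ) + 1 - r)) *
        (if (t : ℕ) = r + d.2 - 1 then (1:ℝ) else 0)) := by
    rw [e0, ← Finset.sum_sub_distrib]
    refine Finset.sum_congr rfl fun t _ => by ring
  rw [e, sum_pick (d.1 - 1) (by omega) _, sum_pick (r + d.2 - 1) (by omega) _]
  have c1 : ((⟨d.1 - 1, by omega⟩ : Fin (r + c)) : ℕ) = d.1 - 1 := rfl
  have c2 : ((⟨r + d.2 - 1, by omega⟩ : Fin (r + c)) : ℕ) = r + d.2 - 1 := rfl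
  rw [c1, c2, if_pos (by omega : d.1 - 1 < r), if_neg (by omega : ¬ r + d.2 - 1 < r)]
  rw [show d.1 - 1 + 1 = d.1 by omega, show r + d.2 - 1 + 1 - r = d.2 by omega]

lemma img_fst_eq {D S : Finset (ℕ × ℕ)} {r c : ℕ} (hocc : Occupies (↑D : Set (ℕ × ℕ)) r c)
    (hSD : S ⊆ D) (hrows : ∀ i, 1 ≤ i → i ≤ r → ∃ j, (i, j) ∈ S) :
    S.image Prod.fst = Finset.Icc 1 r := by
  ext i
  simp only [Finset.mem_image, Finset.mem_Icc]
  constructor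
  · rintro ⟨z, hz, rfl⟩
    have := hocc.1 z (by exact_mod_cast hSD hz)
    exact ⟨this.1, this.2.1⟩
  · rintro ⟨h1, h2⟩
    obtain ⟨j, hj⟩ := hrows i h1 h2
    exact ⟨(i, j), hj, rfl⟩

lemma img_snd_eq {D S : Finset (ℕ × ℕ)} {r c : ℕ} (hocc : Occupies (↑D : Set (ℕ × ℕ)) r c)
    (hSD : S ⊆ D) (hcols : ∀ j, 1 ≤ j → j ≤ c → ∃ i, (i, j) ∈ S) :
    S.image Prod.snd = Finset.Icc 1 c := by
  ext j
  simp only [Finset.mem_image, Finset.mem_Icc]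
  constructor
  · rintro ⟨z, hz, rfl⟩
    have := hocc.1 z (by exact_mod_cast hSD hz)
    exact ⟨this.2.2.1, this.2.2.2⟩
  · rintro ⟨h1, h2⟩
    obtain ⟨i, hi⟩ := hcols j h1 h2
    exact ⟨(i, j), hi, rfl⟩

lemma row_surj {D S : Finset (ℕ × ℕ)} {r c : ℕ} (hocc : Occupies (↑D : Set (ℕ × ℕ)) r c)
    (hrows : ∀ i, 1 ≤ i → i ≤ r → ∃ j, (i, j) ∈ S) :
    ∀ d ∈ D, ∃ s ∈ S, s.1 = d.1 := by
  intro d hd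
  have hb := hocc.1 d (by exact_mod_cast hd)
  obtain ⟨j, hj⟩ := hrows d.1 hb.1 hb.2.1
  exact ⟨(d.1, j), hj, rfl⟩

theorem part2 {D : Finset (ℕ × ℕ)} {r c k : ℕ} (hne : D.Nonempty)
    (hskew : IsSkew (↑D : Set (ℕ × ℕ))) (hocc : Occupies (↑D : Set (ℕ × ℕ)) r c)
    (hk : compCount (↑D : Set (ℕ × ℕ)) = k)
    {S : Finset (ℕ × ℕ)} (hS : IsNASF D r c k S) :
    ∃ g : (Fin (r + c) → ℝ) →ᵃ[ℝ] ℝ,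
      ∀ x ∈ convexHull ℝ (boxVec r c '' (↑S : Set (ℕ × ℕ))), natFun D r c x = g x := by
  classical
  obtain ⟨hSD, hScard, hSrows, hScols, hSacy, hSnc'⟩ := hS
  have hSnc : NC S := hSnc'
  have hsum : compCount (↑S : Set (ℕ × ℕ)) + S.card = r + c := by
    have h := compCount_add_card S hSacy
    rw [img_fst_eq hocc hSD hSrows, img_snd_eq hocc hSD hScols] at h
    rw [h, Nat.card_Icc, Nat.card_Icc]
    omega
  have hsur := row_surj hocc hSrows
  have hle : k ≤ compCount (↑S : Set (ℕ × ℕ)) := hk ▸ compCount_le_of_sub hSD hsur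
  have hccS : compCount (↑S : Set (ℕ × ℕ)) = k := by omega
  have hCR := conn_restrict hSD hsur (by rw [hccS, hk])
  obtain ⟨a, b, hsol⟩ := exists_potential S hSacy (wt r)
  have hdom : ∀ d ∈ D, wt r d ≤ a d.1 - b d.2 := by
    intro d hd
    have hb := box_bounds hskew hocc hd
    obtain ⟨j₁, hj₁⟩ := hSrows d.1 hb.1 hb.2.1
    obtain ⟨i₂, hi₂⟩ := hScols d.2 hb.2.2.1 hb.2.2.2
    have hconnD : Conn D (d.1, j₁) (i₂, d.2) :=
      ReflTransGen.head ⟨hSD hj₁, hd, Or.inl rfl⟩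
        (ReflTransGen.single ⟨hd, hSD hi₂, Or.inr rfl⟩)
    have hconnS := hCR _ _ hj₁ hi₂ hconnD
    rcases conn_mono hSnc hj₁ hconnS with hdr | hdr
    · have h := tel_head hsol _ hdr hj₁
      simpa [wt] using h
    · have h := tel_tail hsol _ hdr hi₂
      simpa [wt] using h
  refine ⟨(linOf r c a b).toAffineMap, ?_⟩
  intro x hx
  have hxD : x ∈ convexHull ℝ (boxVec r c '' (↑D : Set (ℕ × ℕ))) :=
    convexHull_mono (Set.image_mono (by exact_mod_cast hSD)) hx
  have hub : natFun D r c x ≤ linOf r c a b x := by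
    refine csSup_le (slice_nonempty hxD) ?_
    rintro t ht
    obtain ⟨w, hw0, hw1, hwx, hwt⟩ := rep_of_slice ht
    have hval : linOf r c a b x = ∑ d ∈ D, w d * (a d.1 - b d.2) := by
      rw [← hwx, map_sum]
      refine Finset.sum_congr rfl fun d hd => ?_
      have hb := box_bounds hskew hocc hd
      rw [map_smul, smul_eq_mul, linOf_boxVec a b hb.1 hb.2.1 hb.2.2.1 hb.2.2.2]
    rw [hval, ← hwt]
    exact Finset.sum_le_sum fun d hd => mul_le_mul_of_nonneg_left (hdom d hd) (hw0 d hd)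
  have hlb : linOf r c a b x ≤ natFun D r c x := by
    obtain ⟨w, hw0, hw1, hwx⟩ := (hull_rep (boxVec r c) S x).mp hx
    set w' := fun d => if d ∈ S then w d else 0 with hw'def
    have hw'0 : ∀ d ∈ D, 0 ≤ w' d := by
      intro d _
      by_cases h : d ∈ S <;> simp [hw'def, h]
      exact hw0 d h
    have hDS : D ∩ S = S := Finset.inter_eq_right.mpr hSD
    have hw'1 : ∑ d ∈ D, w' d = 1 := by
      rw [hw'def]
      rw [Finset.sum_ite_mem, hDS, hw1]
    have hw'x : ∑ d ∈ D, w' d • boxVec r c d = x := by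
      rw [show (∑ d ∈ D, w' d • boxVec r c d)
          = ∑ d ∈ D, (if d ∈ S then w d • boxVec r c d else 0) from
        Finset.sum_congr rfl fun d _ => by
          by_cases h : d ∈ S <;> simp [hw'def, h]]
      rw [Finset.sum_ite_mem, hDS, hwx]
    have hval : ∑ d ∈ D, w' d * wt r d = linOf r c a b x := by
      rw [show (∑ d ∈ D, w' d * wt r d) = ∑ d ∈ D, (if d ∈ S then w d * wt r d else 0) from
        Finset.sum_congr rfl fun d _ => by
          by_cases h : d ∈ S <;> simp [hw'def, h]]
      rw [Finset.sum_ite_mem, hDS]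
      rw [← hwx, map_sum]
      refine Finset.sum_congr rfl fun d hd => ?_
      have hb := box_bounds hskew hocc (hSD hd)
      rw [map_smul, smul_eq_mul, linOf_boxVec a b hb.1 hb.2.1 hb.2.2.1 hb.2.2.2,
        hsol d hd]
    have hmem := slice_of_rep hw'0 hw'1 hw'x
    rw [hval] at hmem
    exact le_natFun hne hmem
  have hfin : natFun D r c x = linOf r c a b x := le_antisymm hub hlb
  rw [hfin]
  simp

end N7

namespace N7

open Relation Finset Function

lemma sum_chi {β : Type*} [AddCommMonoid β] [Module ℝ β] (D : Finset (ℕ × ℕ)) {a : ℕ × ℕ}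
    (ha : a ∈ D) (h : ℕ × ℕ → β) :
    ∑ d ∈ D, (if d = a then (1:ℝ) else 0) • h d = h a := by
  classical
  rw [show (∑ d ∈ D, (if d = a then (1:ℝ) else 0) • h d)
      = ∑ d ∈ D, (if d = a then h d else 0) from Finset.sum_congr rfl fun d _ => by
    split <;> simp]
  rw [Finset.sum_ite_eq' D a h]
  simp [ha]

lemma swap_sum {β : Type*} [AddCommGroup β] [Module ℝ β] (D : Finset (ℕ × ℕ))
    (lam : ℕ × ℕ → ℝ) (ε : ℝ) {d₁ d₂ e₁ e₂ : ℕ × ℕ} (hd₁ : d₁ ∈ D) (hd₂ : d₂ ∈ D)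
    (he₁ : e₁ ∈ D) (he₂ : e₂ ∈ D) (F : ℕ × ℕ → β) :
    ∑ d ∈ D, (lam d + ε * ((if d = e₁ then (1:ℝ) else 0) + (if d = e₂ then (1:ℝ) else 0))
        - ε * ((if d = d₁ then (1:ℝ) else 0) + (if d = d₂ then (1:ℝ) else 0))) • F d
      = (∑ d ∈ D, lam d • F d) + ε • (F e₁ + F e₂) - ε • (F d₁ + F d₂) := by
  classical
  have expand : ∀ d ∈ D,
      (lam d + ε * ((if d = e₁ then (1:ℝ) else 0) + (if d = e₂ then (1:ℝ) else 0))
        - ε * ((if d = d₁ then (1:ℝ) else 0) + (if d = d₂ then (1:ℝ) else 0))) • F d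
      = lam d • F d
        + (ε • ((if d = e₁ then (1:ℝ) else 0) • F d) + ε • ((if d = e₂ then (1:ℝ) else 0) • F d))
        - (ε • ((if d = d₁ then (1:ℝ) else 0) • F d)
            + ε • ((if d = d₂ then (1:ℝ) else 0) • F d)) := by
    intro d _
    rw [sub_smul, add_smul, mul_smul, mul_smul, add_smul, add_smul, smul_add, smul_add]
  rw [Finset.sum_congr rfl expand, Finset.sum_sub_distrib, Finset.sum_add_distrib,
    Finset.sum_add_distrib, Finset.sum_add_distrib, ← Finset.smul_sum, ← Finset.smul_sum,
    ← Finset.smul_sum, ← Finset.smul_sum, sum_chi D he₁ F, sum_chi D he₂ F, sum_chi D hd₁ F,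
    sum_chi D hd₂ F, smul_add, smul_add]

theorem part3 {D : Finset (ℕ × ℕ)} {r c k : ℕ} (hne : D.Nonempty)
    (hskew : IsSkew (↑D : Set (ℕ × ℕ))) (hocc : Occupies (↑D : Set (ℕ × ℕ)) r c)
    (hk : compCount (↑D : Set (ℕ × ℕ)) = k)
    (A : Set (Fin (r + c) → ℝ)) (hA : A ⊆ convexHull ℝ (boxVec r c '' (↑D : Set (ℕ × ℕ))))
    (hAconv : Convex ℝ A)
    (hg : ∃ g : (Fin (r + c) → ℝ) →ᵃ[ℝ] ℝ, ∀ x ∈ A, natFun D r c x = g x) :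
    ∃ S : Finset (ℕ × ℕ), IsNASF D r c k S ∧
      A ⊆ convexHull ℝ (boxVec r c '' (↑S : Set (ℕ × ℕ))) := by
  classical
  obtain ⟨g, hgA⟩ := hg
  have hrep : ∀ x, x ∈ A → ∃ w : ℕ × ℕ → ℝ, (∀ d ∈ D, 0 ≤ w d) ∧ (∑ d ∈ D, w d = 1) ∧
      (∑ d ∈ D, w d • boxVec r c d = x) ∧ (∑ d ∈ D, w d * wt r d = natFun D r c x) := by
    intro x hx
    exact rep_of_slice (natFun_mem hne (hA hx))
  choose! w hw0 hw1 hwx hwf using hrep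
  set T := D.filter (fun d => ∃ x ∈ A, 0 < w x d) with hTdef
  have hTD : T ⊆ D := Finset.filter_subset _ _
  have hTnc : NC T := by
    rintro d₁ hd₁ d₂ hd₂ ⟨hlt1, hlt2⟩
    obtain ⟨hd₁D, x, hxA, hx1⟩ := Finset.mem_filter.mp hd₁
    obtain ⟨hd₂D, y, hyA, hy2⟩ := Finset.mem_filter.mp hd₂
    set m := (1/2 : ℝ) • x + (1/2 : ℝ) • y with hmdef
    have hmA : m ∈ A := hAconv hxA hyA (by norm_num) (by norm_num) (by norm_num)
    set lam := fun d => (1/2 : ℝ) * w x d + (1/2 : ℝ) * w y d with hlamdef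
    have hl0 : ∀ d ∈ D, 0 ≤ lam d := by
      intro d hd
      have := hw0 x hxA d hd
      have := hw0 y hyA d hd
      positivity
    have hl1 : ∑ d ∈ D, lam d = 1 := by
      rw [hlamdef, Finset.sum_add_distrib, ← Finset.mul_sum, ← Finset.mul_sum,
        hw1 x hxA, hw1 y hyA]
      norm_num
    have hlL : ∑ d ∈ D, lam d • lv r c d = (m, natFun D r c m) := by
      have hx' : ∑ d ∈ D, w x d • lv r c d = (x, natFun D r c x) := by
        rw [Prod.ext_iff, Prod.fst_sum, Prod.snd_sum]
        constructor
        · simpa only [lv, Prod.smul_mk] using hwx x hxA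
        · simpa only [lv, Prod.smul_mk, smul_eq_mul] using hwf x hxA
      have hy' : ∑ d ∈ D, w y d • lv r c d = (y, natFun D r c y) := by
        rw [Prod.ext_iff, Prod.fst_sum, Prod.snd_sum]
        constructor
        · simpa only [lv, Prod.smul_mk] using hwx y hyA
        · simpa only [lv, Prod.smul_mk, smul_eq_mul] using hwf y hyA
      have hsplit : ∑ d ∈ D, lam d • lv r c d
          = (1/2 : ℝ) • ∑ d ∈ D, w x d • lv r c d + (1/2 : ℝ) • ∑ d ∈ D, w y d • lv r c d := by
        rw [Finset.smul_sum, Finset.smul_sum, ← Finset.sum_add_distrib]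
        refine Finset.sum_congr rfl fun d _ => ?_
        rw [hlamdef, add_smul, smul_smul, smul_smul]
      rw [hsplit, hx', hy']
      have hfm : natFun D r c m = (1/2 : ℝ) * natFun D r c x + (1/2 : ℝ) * natFun D r c y := by
        rw [hgA m hmA, hgA x hxA, hgA y hyA]
        have e : ∀ z, g z = g.linear z + g 0 := fun z => by
          conv_lhs => rw [g.decomp]
          rfl
        rw [e m, e x, e y, hmdef, map_add, map_smul, map_smul]
        simp only [smul_eq_mul]
        ring
      rw [Prod.smul_mk, Prod.smul_mk, Prod.mk_add_mk, hfm]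
      rfl
    set e₁ := (d₁.1, d₂.2) with he₁def
    set e₂ := (d₂.1, d₁.2) with he₂def
    have he₁D : e₁ ∈ D :=
      skew_box hskew hd₁D hd₂D (le_refl _) (le_of_lt hlt1) (le_of_lt hlt2) (le_refl _)
    have he₂D : e₂ ∈ D :=
      skew_box hskew hd₁D hd₂D (le_of_lt hlt1) (le_refl _) (le_refl _) (le_of_lt hlt2)
    have hld₁ : 0 < lam d₁ := by
      have h1 := hw0 y hyA d₁ hd₁D
      rw [hlamdef]
      dsimp only
      linarith
    have hld₂ : 0 < lam d₂ := by
      have h1 := hw0 x hxA d₂ hd₂D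
      rw [hlamdef]
      dsimp only
      linarith
    set ε := min (lam d₁) (lam d₂) with hεdef
    have hε : 0 < ε := lt_min hld₁ hld₂
    have hne1 : e₁ ≠ d₁ := by simp only [ne_eq, he₁def, Prod.ext_iff]; omega
    have hne2 : e₁ ≠ d₂ := by simp only [ne_eq, he₁def, Prod.ext_iff]; omega
    have hne3 : e₂ ≠ d₁ := by simp only [ne_eq, he₂def, Prod.ext_iff]; omega
    have hne4 : e₂ ≠ d₂ := by simp only [ne_eq, he₂def, Prod.ext_iff]; omega
    have hne5 : d₁ ≠ d₂ := by simp only [ne_eq, Prod.ext_iff]; omega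
    set lam' := fun d => lam d
        + ε * ((if d = e₁ then (1:ℝ) else 0) + (if d = e₂ then (1:ℝ) else 0))
        - ε * ((if d = d₁ then (1:ℝ) else 0) + (if d = d₂ then (1:ℝ) else 0)) with hl'def
    have h'0 : ∀ d ∈ D, 0 ≤ lam' d := by
      intro d hd
      rw [hl'def]
      dsimp only
      by_cases h1 : d = d₁
      · subst h1
        rw [if_neg (fun h => hne1 h.symm), if_neg (fun h => hne3 h.symm), if_pos rfl,
          if_neg hne5]
        have : ε ≤ lam d := min_le_left _ _
        linarith
      by_cases h2 : d = d₂
      · subst h2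
        rw [if_neg (fun h => hne2 h.symm), if_neg (fun h => hne4 h.symm), if_neg
          (fun h => hne5 h.symm), if_pos rfl]
        have : ε ≤ lam d := min_le_right _ _
        linarith
      · rw [if_neg h1, if_neg h2]
        have h3 : (0:ℝ) ≤ if d = e₁ then (1:ℝ) else 0 := by positivity
        have h4 : (0:ℝ) ≤ if d = e₂ then (1:ℝ) else 0 := by positivity
        have h5 := hl0 d hd
        nlinarith
    have h'1 : ∑ d ∈ D, lam' d = 1 := by
      have h := swap_sum D lam ε hd₁D hd₂D he₁D he₂D (fun _ => (1:ℝ))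
      have e : ∑ d ∈ D, lam' d = ∑ d ∈ D, (lam d
          + ε * ((if d = e₁ then (1:ℝ) else 0) + (if d = e₂ then (1:ℝ) else 0))
          - ε * ((if d = d₁ then (1:ℝ) else 0) + (if d = d₂ then (1:ℝ) else 0))) • (1:ℝ) := by
        refine Finset.sum_congr rfl fun d _ => ?_
        rw [smul_eq_mul, mul_one]
      rw [e, h]
      simp only [smul_eq_mul, mul_one]
      rw [hl1]
      ring
    have h'L : ∑ d ∈ D, lam' d • lv r c d
        = (∑ d ∈ D, lam d • lv r c d) + ε • (lv r c e₁ + lv r c e₂)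
          - ε • (lv r c d₁ + lv r c d₂) :=
      swap_sum D lam ε hd₁D hd₂D he₁D he₂D (lv r c)
    have hvertex : boxVec r c e₁ + boxVec r c e₂ - (boxVec r c d₁ + boxVec r c d₂) = 0 := by
      funext t
      simp only [boxVec, he₁def, he₂def, Pi.add_apply, Pi.sub_apply, Pi.zero_apply]
      ring
    have hwtval : wt r e₁ + wt r e₂ - (wt r d₁ + wt r d₂)
        = 2 * (((d₂.1 : ℝ) - (d₁.1 : ℝ)) * ((d₂.2 : ℝ) - (d₁.2 : ℝ))) := by
      simp only [wt, he₁def, he₂def]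
      ring
    have hfinal : ∑ d ∈ D, lam' d • lv r c d
        = (m, natFun D r c m + ε * (2 * (((d₂.1 : ℝ) - (d₁.1 : ℝ)) * ((d₂.2 : ℝ) - (d₁.2 : ℝ))))) := by
      rw [h'L, hlL]
      have hv : boxVec r c e₁ + boxVec r c e₂ = boxVec r c d₁ + boxVec r c d₂ := by
        have := hvertex
        rwa [sub_eq_zero] at this
      apply Prod.ext
      · show ((m, natFun D r c m) + ε • (lv r c e₁ + lv r c e₂)
            - ε • (lv r c d₁ + lv r c d₂)).1 = m
        simp only [lv, Prod.fst_add, Prod.fst_sub, Prod.smul_fst]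
        rw [hv]
        exact add_sub_cancel_right _ _
      · show ((m, natFun D r c m) + ε • (lv r c e₁ + lv r c e₂)
            - ε • (lv r c d₁ + lv r c d₂)).2
            = natFun D r c m + ε * (2 * (((d₂.1 : ℝ) - (d₁.1 : ℝ)) * ((d₂.2 : ℝ) - (d₁.2 : ℝ))))
        simp only [lv, Prod.snd_add, Prod.snd_sub, Prod.smul_snd, smul_eq_mul]
        linear_combination ε * hwtval
    have hmem : (m, natFun D r c m
        + ε * (2 * (((d₂.1 : ℝ) - (d₁.1 : ℝ)) * ((d₂.2 : ℝ) - (d₁.2 : ℝ)))))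
        ∈ convexHull ℝ (lv r c '' (↑D : Set (ℕ × ℕ))) := by
      rw [hull_rep (lv r c) D]
      exact ⟨lam', h'0, h'1, hfinal⟩
    have hle := le_natFun hne hmem
    have hp1 : (d₁.1 : ℝ) < (d₂.1 : ℝ) := by exact_mod_cast hlt1
    have hp2 : (d₁.2 : ℝ) < (d₂.2 : ℝ) := by exact_mod_cast hlt2
    nlinarith [mul_pos (sub_pos.mpr hp1) (sub_pos.mpr hp2)]
  have hAT : ∀ x ∈ A, x ∈ convexHull ℝ (boxVec r c '' (↑T : Set (ℕ × ℕ))) := by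
    intro x hx
    rw [hull_rep (boxVec r c) T]
    have hzero : ∀ d ∈ D, d ∉ T → w x d = 0 := by
      intro d hd hdT
      have : ¬ (0 < w x d) := by
        intro hpos
        exact hdT (Finset.mem_filter.mpr ⟨hd, x, hx, hpos⟩)
      have := hw0 x hx d hd
      linarith
    refine ⟨w x, fun d hd => hw0 x hx d (hTD hd), ?_, ?_⟩
    · exact (Finset.sum_subset hTD (fun d hd hdT => hzero d hd hdT)).trans (hw1 x hx)
    · exact (Finset.sum_subset hTD (fun d hd hdT => by
        rw [hzero d hd hdT, zero_smul])).trans (hwx x hx)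
  obtain ⟨S, hSnasf, hTS⟩ := exists_nasf hskew hocc hk hTD hTnc
  refine ⟨S, hSnasf, fun x hx => ?_⟩
  exact convexHull_mono (Set.image_mono (by exact_mod_cast hTS)) (hAT x hx)

end N7

theorem stmt7 (D : Finset (ℕ × ℕ)) (r c k : ℕ) (hne : D.Nonempty)
    (hskew : IsSkew (↑D)) (hocc : Occupies (↑D) r c) (hk : compCount (↑D) = k) :
    ConcaveOn ℝ (convexHull ℝ (boxVec r c '' (↑D : Set (ℕ × ℕ)))) (natFun D r c) ∧
    (∀ S : Finset (ℕ × ℕ), IsNASF D r c k S →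
      ∃ g : (Fin (r + c) → ℝ) →ᵃ[ℝ] ℝ,
        ∀ x ∈ convexHull ℝ (boxVec r c '' (↑S : Set (ℕ × ℕ))), natFun D r c x = g x) ∧
    (∀ A : Set (Fin (r + c) → ℝ), A ⊆ convexHull ℝ (boxVec r c '' (↑D : Set (ℕ × ℕ))) →
      Convex ℝ A →
      (∃ g : (Fin (r + c) → ℝ) →ᵃ[ℝ] ℝ, ∀ x ∈ A, natFun D r c x = g x) →
      ∃ S : Finset (ℕ × ℕ), IsNASF D r c k S ∧
        A ⊆ convexHull ℝ (boxVec r c '' (↑S : Set (ℕ × ℕ)))) := by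
  refine ⟨N7.natFun_concave hne, ?_, ?_⟩
  · intro S hS
    exact N7.part2 hne hskew hocc hk hS
  · intro A hA hconv hg
    exact N7.part3 hne hskew hocc hk A hA hconv hg
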